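/- arXiv:2405.11303 — 6 statements merged into one kernel-verified Lean document; each statement's English description precedes it below -/
import Mathlib

section
/- Let A ∈ (1,2] and let f be analytic on the open unit disc 𝔻 with f(0)=0, f'(0)=1 and Re f'(z) > 0 for all z ∈ 𝔻. Then Re T_f(z) > 0 for all z with |z| < 1 − 2/√(A+3), where T_f(z) = (2/(A−1))·[((A+1)/2)·(1+z)/(1−z) − 1 − z f''(z)/f'(z)]. -/
open Complex Metric Set


private lemma normSq_mobius (a w : ℂ) :
    Complex.normSq (1 + (starRingEnd ℂ) a * w) - Complex.normSq (w + a)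
      = (1 - Complex.normSq a) * (1 - Complex.normSq w) := by
  simp only [Complex.normSq_apply, Complex.add_re, Complex.add_im, Complex.mul_re,
    Complex.mul_im, Complex.conj_re, Complex.conj_im, Complex.one_re, Complex.one_im]
  ring

private lemma mobius_denom_ne (a w : ℂ) (ha : ‖a‖ < 1) (hw : ‖w‖ < 1) :
    1 + (starRingEnd ℂ) a * w ≠ 0 := by
  intro h
  have h1 : ‖((starRingEnd ℂ) a * w)‖ < 1 := by
    rw [norm_mul, Complex.norm_conj]
    calc ‖a‖ * ‖w‖ ≤ 1 * ‖w‖ :=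
          mul_le_mul_of_nonneg_right ha.le (norm_nonneg w)
      _ < 1 := by simpa using hw
  have : (starRingEnd ℂ) a * w = -1 := by linear_combination h
  rw [this] at h1
  simp at h1

private lemma mobius_mapsTo (a : ℂ) (ha : ‖a‖ < 1) :
    MapsTo (fun w => (w + a) / (1 + (starRingEnd ℂ) a * w)) (ball (0:ℂ) 1) (ball (0:ℂ) 1) := by
  intro w hw
  simp only [mem_ball_zero_iff] at hw ⊢
  have hd := mobius_denom_ne a w ha hw
  rw [norm_div, div_lt_one (norm_pos_iff.mpr hd)]
  have := normSq_mobius a w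
  have ha2 : Complex.normSq a < 1 := by
    rw [← Complex.sq_norm] at *; nlinarith [norm_nonneg a]
  have hw2 : Complex.normSq w < 1 := by
    rw [← Complex.sq_norm] at *; nlinarith [norm_nonneg w]
  have key : Complex.normSq (w + a) < Complex.normSq (1 + (starRingEnd ℂ) a * w) := by nlinarith
  rw [← Complex.sq_norm, ← Complex.sq_norm] at key
  nlinarith [norm_nonneg (w + a), norm_nonneg (1 + (starRingEnd ℂ) a * w)]

private lemma mobius_hasDeriv (a w : ℂ) (ha : ‖a‖ < 1) (hw : ‖w‖ < 1) :
    HasDerivAt (fun w => (w + a) / (1 + (starRingEnd ℂ) a * w))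
      ((1 - a * (starRingEnd ℂ) a) / (1 + (starRingEnd ℂ) a * w) ^ 2) w := by
  have h1 : HasDerivAt (fun w : ℂ => w + a) 1 w := (hasDerivAt_id w).add_const a
  have h2 : HasDerivAt (fun w : ℂ => 1 + (starRingEnd ℂ) a * w) ((starRingEnd ℂ) a) w := by
    simpa using ((hasDerivAt_id w).const_mul ((starRingEnd ℂ) a)).const_add 1
  have := h1.div h2 (mobius_denom_ne a w ha hw)
  exact this.congr_deriv (by ring)

/-- Schwarz–Pick lemma for self-maps of the unit disc. -/
private lemma schwarzPick (ω : ℂ → ℂ) (hω : DifferentiableOn ℂ ω (ball (0:ℂ) 1))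
    (hmaps : MapsTo ω (ball (0:ℂ) 1) (ball (0:ℂ) 1)) (z : ℂ) (hz : ‖z‖ < 1) :
    ‖(deriv ω z)‖ * (1 - ‖z‖ ^ 2) ≤ 1 - ‖(ω z)‖ ^ 2 := by
  set b := ω z with hb
  have hbz : ‖b‖ < 1 := by
    have := hmaps (mem_ball_zero_iff.mpr hz)
    rwa [mem_ball_zero_iff] at this
  have hnbz : ‖-b‖ < 1 := by simpa using hbz
  set σ : ℂ → ℂ := fun w => (w + z) / (1 + (starRingEnd ℂ) z * w) with hσ
  set τ : ℂ → ℂ := fun w => (w + (-b)) / (1 + (starRingEnd ℂ) (-b) * w) with hτ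
  have hσmaps : MapsTo σ (ball (0:ℂ) 1) (ball (0:ℂ) 1) := mobius_mapsTo z hz
  have hτmaps : MapsTo τ (ball (0:ℂ) 1) (ball (0:ℂ) 1) := mobius_mapsTo (-b) hnbz
  have hσdiff : DifferentiableOn ℂ σ (ball (0:ℂ) 1) := fun w hw =>
    ((mobius_hasDeriv z w hz (by simpa using mem_ball_zero_iff.mp hw)).differentiableAt).differentiableWithinAt
  have hτdiff : DifferentiableOn ℂ τ (ball (0:ℂ) 1) := fun w hw =>
    ((mobius_hasDeriv (-b) w hnbz (by simpa using mem_ball_zero_iff.mp hw)).differentiableAt).differentiableWithinAt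
  set g : ℂ → ℂ := τ ∘ ω ∘ σ with hg
  have hgdiff : DifferentiableOn ℂ g (ball (0:ℂ) 1) :=
    hτdiff.comp (hω.comp hσdiff hσmaps) (hmaps.comp hσmaps)
  have hgmaps : MapsTo g (ball (0:ℂ) 1) (ball (0:ℂ) 1) := hτmaps.comp (hmaps.comp hσmaps)
  have hσ0 : σ 0 = z := by simp [hσ]
  have hτb : τ b = 0 := by simp [hτ]
  have hg0 : g 0 = 0 := by simp [hg, Function.comp, hσ0, ← hb, hτb]
  have hωz : DifferentiableAt ℂ ω z :=
    hω.differentiableAt (isOpen_ball.mem_nhds (mem_ball_zero_iff.mpr hz))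
  have hdσ : HasDerivAt σ ((1 - z * (starRingEnd ℂ) z) / (1 + (starRingEnd ℂ) z * 0) ^ 2) 0 :=
    mobius_hasDeriv z 0 hz (by simp)
  set dτ : ℂ := (1 - (-b) * (starRingEnd ℂ) (-b)) / (1 + (starRingEnd ℂ) (-b) * b) ^ 2 with hdτval
  have hdτ : HasDerivAt τ dτ b := mobius_hasDeriv (-b) b hnbz hbz
  have hdω : HasDerivAt ω (deriv ω z) z := hωz.hasDerivAt
  have h1 : HasDerivAt (ω ∘ σ) (deriv ω z * ((1 - z * (starRingEnd ℂ) z) / (1 + (starRingEnd ℂ) z * 0) ^ 2)) 0 := by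
    refine HasDerivAt.comp 0 ?_ hdσ
    rw [hσ0]; exact hdω
  have h2 : HasDerivAt g (dτ * (deriv ω z * ((1 - z * (starRingEnd ℂ) z) / (1 + (starRingEnd ℂ) z * 0) ^ 2))) 0 := by
    refine HasDerivAt.comp 0 ?_ h1
    have hc : (ω ∘ σ) 0 = b := by simp [Function.comp, hσ0, hb]
    rw [hc]; exact hdτ
  have hschwarz := Complex.norm_deriv_le_one_of_mapsTo_ball hgdiff (by rw [hg0]; exact hgmaps.mono_right ball_subset_closedBall) one_pos
  rw [h2.deriv] at hschwarz
  -- now rewrite everything in real terms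
  have nz1 : Complex.normSq z < 1 := by
    rw [← Complex.sq_norm]; nlinarith [norm_nonneg z]
  have nb1 : Complex.normSq b < 1 := by
    rw [← Complex.sq_norm]; nlinarith [norm_nonneg b]
  have e1 : (1 : ℂ) - z * (starRingEnd ℂ) z = ((1 - Complex.normSq z : ℝ) : ℂ) := by
    rw [Complex.mul_conj]; push_cast; ring
  have e2 : dτ = ((1 - Complex.normSq b : ℝ) : ℂ) / ((1 - Complex.normSq b : ℝ) : ℂ) ^ 2 := by
    rw [hdτval, map_neg]
    have : -b * -(starRingEnd ℂ) b = b * (starRingEnd ℂ) b := by ring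
    rw [this, Complex.mul_conj]
    have : (1 : ℂ) + -(starRingEnd ℂ) b * b = 1 - b * (starRingEnd ℂ) b := by ring
    rw [this, Complex.mul_conj]
    push_cast; ring
  rw [e2, e1] at hschwarz
  simp only [mul_zero, add_zero, one_pow, div_one, norm_mul, norm_div, norm_pow,
    Complex.norm_real, Real.norm_eq_abs] at hschwarz
  rw [abs_of_pos (by linarith), abs_of_pos (by linarith)] at hschwarz
  have hpos : (0:ℝ) < 1 - Complex.normSq b := by linarith
  rw [← Complex.sq_norm b, ← Complex.sq_norm z] at hschwarz
  rw [← Complex.sq_norm b] at hpos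
  have hmul := mul_le_mul_of_nonneg_left hschwarz (le_of_lt hpos)
  have hX : (1 - ‖b‖ ^ 2) * ((1 - ‖b‖ ^ 2) / (1 - ‖b‖ ^ 2) ^ 2
      * (‖(deriv ω z)‖ * (1 - ‖z‖ ^ 2)))
      = ‖(deriv ω z)‖ * (1 - ‖z‖ ^ 2) := by
    field_simp
  rw [hX, mul_one] at hmul
  exact hmul

/-- Carathéodory-type derivative bound: if `Re p > 0` on the unit disc then
`|p'(z)| (1-|z|²) ≤ 2 Re p(z)`. -/
private lemma caratheodory_deriv (p : ℂ → ℂ) (hp : DifferentiableOn ℂ p (ball (0:ℂ) 1))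
    (hre : ∀ w ∈ ball (0:ℂ) 1, 0 < (p w).re) (z : ℂ) (hz : ‖z‖ < 1) :
    ‖(deriv p z)‖ * (1 - ‖z‖ ^ 2) ≤ 2 * (p z).re := by
  have hzmem : z ∈ ball (0:ℂ) 1 := mem_ball_zero_iff.mpr hz
  have hne : ∀ w ∈ ball (0:ℂ) 1, p w + 1 ≠ 0 := by
    intro w hw h
    have : (p w + 1).re = 0 := by rw [h]; simp
    have : (p w).re + 1 = 0 := by simpa using this
    linarith [hre w hw]
  set ω : ℂ → ℂ := fun w => (p w - 1) / (p w + 1) with hω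
  have hωdiff : DifferentiableOn ℂ ω (ball (0:ℂ) 1) :=
    (hp.sub (differentiableOn_const 1)).div (hp.add (differentiableOn_const 1)) hne
  have hNkey : ∀ w : ℂ, Complex.normSq (w + 1) - Complex.normSq (w - 1) = 4 * w.re := by
    intro w
    simp only [Complex.normSq_apply, Complex.add_re, Complex.add_im, Complex.sub_re,
      Complex.sub_im, Complex.one_re, Complex.one_im]
    ring
  have hωmaps : MapsTo ω (ball (0:ℂ) 1) (ball (0:ℂ) 1) := by
    intro w hw
    simp only [mem_ball_zero_iff, hω]
    have hd := hne w hw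
    rw [norm_div, div_lt_one (norm_pos_iff.mpr hd)]
    have h1 := hNkey (p w)
    have h2 := hre w hw
    have k : Complex.normSq (p w - 1) < Complex.normSq (p w + 1) := by nlinarith
    rw [← Complex.sq_norm, ← Complex.sq_norm] at k
    nlinarith [norm_nonneg (p w - 1), norm_nonneg (p w + 1)]
  have hdp : HasDerivAt p (deriv p z) z :=
    (hp.differentiableAt (isOpen_ball.mem_nhds hzmem)).hasDerivAt
  have hdω : HasDerivAt ω (2 * deriv p z / (p z + 1) ^ 2) z := by
    have h := ((hdp.sub_const 1).div (hdp.add_const 1) (hne z hzmem))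
    exact h.congr_deriv (by ring)
  have hsp := schwarzPick ω hωdiff hωmaps z hz
  rw [hdω.deriv] at hsp
  set N : ℝ := Complex.normSq (p z + 1) with hN
  have hNpos : 0 < N := Complex.normSq_pos.mpr (hne z hzmem)
  have e1 : ‖(2 * deriv p z / (p z + 1) ^ 2)‖ = 2 * ‖(deriv p z)‖ / N := by
    rw [norm_div, norm_mul, norm_pow, Complex.sq_norm]
    norm_num
    rfl
  have e2 : ‖(ω z)‖ ^ 2 = Complex.normSq (p z - 1) / N := by
    rw [Complex.sq_norm]
    show Complex.normSq ((p z - 1) / (p z + 1)) = _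
    rw [Complex.normSq_div]
  rw [e1, e2] at hsp
  have h4 := hNkey (p z)
  have habs := norm_nonneg (deriv p z)
  have ht2 : 1 - ‖z‖ ^ 2 > 0 := by nlinarith [norm_nonneg z]
  have hmul := mul_le_mul_of_nonneg_left hsp hNpos.le
  have lhs_eq : N * (2 * ‖(deriv p z)‖ / N * (1 - ‖z‖ ^ 2))
      = 2 * ‖(deriv p z)‖ * (1 - ‖z‖ ^ 2) := by
    field_simp
  have rhs_eq : N * (1 - Complex.normSq (p z - 1) / N) = N - Complex.normSq (p z - 1) := by
    field_simp
  rw [lhs_eq, rhs_eq] at hmul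
  nlinarith

/-- The concavity test function `T_f` associated with `Co(A)`. -/
noncomputable def Tfun (A : ℝ) (f : ℂ → ℂ) (z : ℂ) : ℂ :=
  (2 / ((A : ℂ) - 1)) * ((((A : ℂ) + 1) / 2) * (1 + z) / (1 - z) - 1 -
    z * deriv (deriv f) z / deriv f z)

set_option maxHeartbeats 1000000 in
/-- Radius of concavity of the class `P'` of analytic `f` with `Re f' > 0` on `𝔻`. -/
theorem radius_of_concavity_Pprime
    (A : ℝ) (hA : A ∈ Set.Ioc (1 : ℝ) 2)
    (f : ℂ → ℂ) (hf : AnalyticOn ℂ f (ball (0 : ℂ) 1))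
    (hf0 : f 0 = 0) (hf'0 : deriv f 0 = 1)
    (hre : ∀ z ∈ ball (0 : ℂ) 1, 0 < (deriv f z).re)
    (z : ℂ) (hz : ‖z‖ < 1 - 2 / Real.sqrt (A + 3)) :
    0 < (Tfun A f z).re := by
  obtain ⟨hA1, hA2⟩ := hA
  set t : ℝ := ‖z‖ with htdef
  have ht0 : 0 ≤ t := norm_nonneg z
  have hs2 : (2:ℝ) < Real.sqrt (A + 3) := by
    rw [show (2:ℝ) = Real.sqrt 4 by rw [show (4:ℝ) = 2^2 by norm_num, Real.sqrt_sq]; norm_num]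
    exact Real.sqrt_lt_sqrt (by norm_num) (by linarith)
  have hspos : (0:ℝ) < Real.sqrt (A + 3) := by linarith
  have ht1 : t < 1 := by
    have : (0:ℝ) < 2 / Real.sqrt (A + 3) := by positivity
    linarith
  -- the key squared inequality : 4 < (1-t)^2 * (A+3)
  have hkey : 4 < (1 - t) ^ 2 * (A + 3) := by
    have h1 : 2 / Real.sqrt (A + 3) < 1 - t := by linarith
    have h2 : 2 < (1 - t) * Real.sqrt (A + 3) := by
      rw [div_lt_iff₀ hspos] at h1; linarith
    have h3 := Real.sq_sqrt (by linarith : (0:ℝ) ≤ A + 3)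
    nlinarith [Real.sqrt_nonneg (A + 3)]
  have hzmem : z ∈ ball (0:ℂ) 1 := mem_ball_zero_iff.mpr ht1
  -- analytic facts
  have hfN : AnalyticOnNhd ℂ f (ball (0:ℂ) 1) := isOpen_ball.analyticOn_iff_analyticOnNhd.mp hf
  have hpd : DifferentiableOn ℂ (deriv f) (ball (0:ℂ) 1) := hfN.deriv.differentiableOn
  set p : ℂ := deriv f z with hp
  set q : ℂ := deriv (deriv f) z with hq
  have hrep : 0 < p.re := hre z hzmem
  have hpabs : 0 < ‖p‖ := norm_pos_iff.mpr (fun h => by simp [h] at hrep)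
  have hrele : p.re ≤ ‖p‖ := Complex.re_le_norm p
  have hcar : ‖q‖ * (1 - t ^ 2) ≤ 2 * p.re :=
    caratheodory_deriv (deriv f) hpd hre z ht1
  have ht2 : (0:ℝ) < 1 - t ^ 2 := by nlinarith
  -- bound on Re (z q / p)
  have hbound : (z * q / p).re ≤ 2 * t / (1 - t ^ 2) := by
    have h1 : (z * q / p).re ≤ ‖(z * q / p)‖ := Complex.re_le_norm _
    have h2 : ‖(z * q / p)‖ = t * ‖q‖ / ‖p‖ := by
      rw [norm_div, norm_mul]
    have h3 : t * ‖q‖ / ‖p‖ ≤ 2 * t / (1 - t ^ 2) := by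
      rw [div_le_div_iff₀ hpabs ht2]
      nlinarith [norm_nonneg q]
    linarith [h2 ▸ h1]
  -- bound on Re ((1+z)/(1-z))
  have hz1 : (1:ℂ) - z ≠ 0 := by
    intro h
    have hz1' : z = 1 := by linear_combination -h
    have : t = 1 := by rw [htdef, hz1', norm_one]
    linarith
  have hrezz : ((1 + z) / (1 - z)).re = (1 - Complex.normSq z) / Complex.normSq (1 - z) := by
    rw [Complex.div_re, ← add_div]
    congr 1
    simp only [Complex.add_re, Complex.one_re, Complex.sub_re, Complex.add_im, Complex.one_im,
      Complex.sub_im, Complex.normSq_apply]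
    ring
  have hNz : Complex.normSq (1 - z) ≤ (1 + t) ^ 2 := by
    have habs : ‖(1 - z)‖ ≤ 1 + t := by
      simpa using norm_sub_le (1:ℂ) z
    rw [← Complex.sq_norm]
    nlinarith [norm_nonneg (1 - z)]
  have hNzpos : 0 < Complex.normSq (1 - z) := Complex.normSq_pos.mpr hz1
  have hfrac : (1 - t) / (1 + t) ≤ ((1 + z) / (1 - z)).re := by
    rw [hrezz, ← Complex.sq_norm z]
    rw [div_le_div_iff₀ (by linarith) hNzpos]
    nlinarith
  -- assemble
  rw [Tfun]
  have hc : (2 / ((A:ℂ) - 1)) = ((2 / (A - 1) : ℝ) : ℂ) := by push_cast; ring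
  have hc2 : (((A:ℂ) + 1) / 2) * (1 + z) / (1 - z)
      = (((A + 1) / 2 : ℝ) : ℂ) * ((1 + z) / (1 - z)) := by
    push_cast; ring
  rw [hc, hc2, Complex.re_ofReal_mul]
  have hApos : (0:ℝ) < 2 / (A - 1) := div_pos two_pos (by linarith)
  have hWre : ((((A + 1) / 2 : ℝ) : ℂ) * ((1 + z) / (1 - z)) - 1 - z * q / p).re
      = (A + 1) / 2 * ((1 + z) / (1 - z)).re - 1 - (z * q / p).re := by
    rw [Complex.sub_re, Complex.sub_re, Complex.one_re, Complex.re_ofReal_mul]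
  rw [hWre]
  have hfinal : (0:ℝ) < (A + 1) / 2 * ((1 - t) / (1 + t)) - 1 - 2 * t / (1 - t ^ 2) := by
    have e : (A + 1) / 2 * ((1 - t) / (1 + t)) - 1 - 2 * t / (1 - t ^ 2)
        = ((A + 3) * (1 - t) ^ 2 - 4) / (2 * (1 - t ^ 2)) := by
      field_simp
      ring
    rw [e]
    apply div_pos (by nlinarith) (by nlinarith)
  have hmono : (A + 1) / 2 * ((1 - t) / (1 + t)) ≤ (A + 1) / 2 * ((1 + z) / (1 - z)).re :=
    mul_le_mul_of_nonneg_left hfrac (by linarith)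
  have : 0 < (A + 1) / 2 * ((1 + z) / (1 - z)).re - 1 - (z * q / p).re := by linarith
  positivity
end

section
/- Let A ∈ (1,2] and let f₀(z) = −z + 2 log(1+z) on the open unit disc 𝔻 (principal branch of the logarithm). Then f₀(0)=0, f₀'(0)=1, Re f₀'(z) > 0 on 𝔻, and T_{f₀}(z) = ((A+3)/(A−1))·(1/(1−z²))·(z² + 2z + (A−1)/(A+3)) for all z ∈ 𝔻. Moreover, for every r with 1 − 2/√(A+3) < r < 1 one has Re T_{f₀}(−r) < 0; consequently the radius 1 − 2/√(A+3) in the radius-of-concavity result for P' is sharp. -/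
open Complex Metric Set

lemma aux_slit {z : ℂ} (hz : z ∈ ball (0 : ℂ) 1) : 1 + z ∈ Complex.slitPlane := by
  rw [mem_ball, dist_zero_right] at hz
  rw [Complex.mem_slitPlane_iff]
  left
  have h1 : |z.re| ≤ ‖z‖ := Complex.abs_re_le_norm z
  have h2 : -1 < z.re := by
    have := abs_lt.mp (lt_of_le_of_lt h1 hz)
    linarith [this.1]
  simp only [Complex.add_re, Complex.one_re]
  linarith

lemma aux_hasDerivAt {f₀ : ℂ → ℂ} (hf₀ : ∀ z, f₀ z = -z + 2 * Complex.log (1 + z))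
    {z : ℂ} (hz : 1 + z ∈ Complex.slitPlane) :
    HasDerivAt f₀ (-1 + 2 * (1 + z)⁻¹) z := by
  have h1 : HasDerivAt (fun w : ℂ => 1 + w) 1 z := (hasDerivAt_id z).const_add 1
  have h2 : HasDerivAt (fun w : ℂ => Complex.log (1 + w)) ((1 + z)⁻¹ * 1) z :=
    (Complex.hasDerivAt_log hz).comp z h1
  have h3 : HasDerivAt (fun w : ℂ => -w + 2 * Complex.log (1 + w))
      (-1 + 2 * ((1 + z)⁻¹ * 1)) z := ((hasDerivAt_id z).neg).add (h2.const_mul 2)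
  have : f₀ = fun w : ℂ => -w + 2 * Complex.log (1 + w) := funext hf₀
  rw [this]
  simpa using h3

lemma aux_deriv {f₀ : ℂ → ℂ} (hf₀ : ∀ z, f₀ z = -z + 2 * Complex.log (1 + z))
    {z : ℂ} (hz : 1 + z ∈ Complex.slitPlane) :
    deriv f₀ z = -1 + 2 * (1 + z)⁻¹ :=
  (aux_hasDerivAt hf₀ hz).deriv

lemma aux_deriv2 {f₀ : ℂ → ℂ} (hf₀ : ∀ z, f₀ z = -z + 2 * Complex.log (1 + z))
    {z : ℂ} (hz : 1 + z ∈ Complex.slitPlane) :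
    deriv (deriv f₀) z = -2 / (1 + z) ^ 2 := by
  have hne : (1 + z) ≠ 0 := Complex.slitPlane_ne_zero hz
  have hopen : IsOpen {w : ℂ | 1 + w ∈ Complex.slitPlane} :=
    Complex.isOpen_slitPlane.preimage (by continuity)
  have heq : deriv f₀ =ᶠ[nhds z] fun w => -1 + 2 * (1 + w)⁻¹ := by
    filter_upwards [hopen.mem_nhds hz] with w hw using aux_deriv hf₀ hw
  rw [heq.deriv_eq]
  have h1 : HasDerivAt (fun w : ℂ => 1 + w) 1 z := (hasDerivAt_id z).const_add 1
  have h2 : HasDerivAt (fun w : ℂ => (1 + w)⁻¹) (-1 / (1 + z) ^ 2) z := h1.inv hne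
  have h3 : HasDerivAt (fun w : ℂ => -1 + 2 * (1 + w)⁻¹) (2 * (-1 / (1 + z) ^ 2)) z :=
    (h2.const_mul 2).const_add (-1)
  rw [h3.deriv]
  ring

/-- Sharpness of the radius of concavity `1 - 2/√(A+3)` of `P'`, exhibited by
`f₀(z) = -z + 2 log(1+z)`. -/
theorem radius_of_concavity_Pprime_sharp
    (A : ℝ) (hA : A ∈ Set.Ioc (1 : ℝ) 2)
    (f₀ : ℂ → ℂ) (hf₀ : ∀ z, f₀ z = -z + 2 * Complex.log (1 + z)) :
    f₀ 0 = 0 ∧ deriv f₀ 0 = 1 ∧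
    (∀ z ∈ ball (0 : ℂ) 1, 0 < (deriv f₀ z).re) ∧
    (∀ z ∈ ball (0 : ℂ) 1,
      Tfun A f₀ z = (((A : ℂ) + 3) / ((A : ℂ) - 1)) * (1 / (1 - z ^ 2)) *
        (z ^ 2 + 2 * z + ((A : ℂ) - 1) / ((A : ℂ) + 3))) ∧
    (∀ r : ℝ, 1 - 2 / Real.sqrt (A + 3) < r → r < 1 →
      (Tfun A f₀ (-(r : ℂ))).re < 0) := by
  obtain ⟨hA1, hA2⟩ := hA
  have h0mem : (0 : ℂ) ∈ ball (0 : ℂ) 1 := by simp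
  -- nonvanishing facts
  have hne1 : ∀ z ∈ ball (0 : ℂ) 1, (1 : ℂ) + z ≠ 0 := fun z hz =>
    Complex.slitPlane_ne_zero (aux_slit hz)
  have hne2 : ∀ z ∈ ball (0 : ℂ) 1, (1 : ℂ) - z ≠ 0 := by
    intro z hz h
    rw [mem_ball, dist_zero_right] at hz
    have : z = 1 := by linear_combination -h
    simp [this] at hz
  -- derivative formula as (1-z)/(1+z)
  have hderiv : ∀ z ∈ ball (0 : ℂ) 1, deriv f₀ z = (1 - z) / (1 + z) := by
    intro z hz
    rw [aux_deriv hf₀ (aux_slit hz)]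
    field_simp [hne1 z hz]
    ring
  -- part 1
  have p1 : f₀ 0 = 0 := by simp [hf₀]
  -- part 2
  have p2 : deriv f₀ 0 = 1 := by rw [hderiv 0 h0mem]; norm_num
  -- part 3
  have p3 : ∀ z ∈ ball (0 : ℂ) 1, 0 < (deriv f₀ z).re := by
    intro z hz
    rw [hderiv z hz, Complex.div_re]
    have hsq : Complex.normSq z < 1 := by
      rw [mem_ball, dist_zero_right] at hz
      have := Complex.sq_norm z
      nlinarith [norm_nonneg z]
    have hpos : 0 < Complex.normSq (1 + z) := Complex.normSq_pos.mpr (hne1 z hz)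
    rw [← add_div, div_pos_iff]
    left
    refine ⟨?_, hpos⟩
    simp only [Complex.sub_re, Complex.sub_im, Complex.one_re, Complex.one_im,
      Complex.add_re, Complex.add_im, Complex.normSq_apply] at hsq ⊢
    nlinarith
  -- part 4
  have p4 : ∀ z ∈ ball (0 : ℂ) 1,
      Tfun A f₀ z = (((A : ℂ) + 3) / ((A : ℂ) - 1)) * (1 / (1 - z ^ 2)) *
        (z ^ 2 + 2 * z + ((A : ℂ) - 1) / ((A : ℂ) + 3)) := by
    intro z hz
    have hAne : ((A : ℂ) - 1) ≠ 0 := by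
      intro h
      have : (A : ℂ) = 1 := by linear_combination h
      rw [show (1 : ℂ) = ((1 : ℝ) : ℂ) by norm_num] at this
      exact absurd (Complex.ofReal_inj.mp this) (by linarith)
    have hA3ne : ((A : ℂ) + 3) ≠ 0 := by
      intro h
      have : (A : ℂ) = ((-3 : ℝ) : ℂ) := by push_cast; linear_combination h
      exact absurd (Complex.ofReal_inj.mp this) (by linarith)
    have h1 := hne1 z hz
    have h2 := hne2 z hz
    have h12 : (1 : ℂ) - z ^ 2 ≠ 0 := by
      intro h
      apply mul_ne_zero h2 h1
      linear_combination h
    rw [Tfun, hderiv z hz, aux_deriv2 hf₀ (aux_slit hz)]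
    have hterm : z * (-2 / (1 + z) ^ 2) / ((1 - z) / (1 + z)) =
        -2 * z / ((1 - z) * (1 + z)) := by
      rw [div_div_eq_mul_div]
      field_simp [h1, h2]
    rw [hterm]
    field_simp [hAne, hA3ne, h1, h2, h12]
    ring
  refine ⟨p1, p2, p3, p4, ?_⟩
  -- part 5
  intro r hr1 hr2
  set c := Real.sqrt (A + 3) with hc
  have hA3pos : (0 : ℝ) < A + 3 := by linarith
  have hcsq : c ^ 2 = A + 3 := Real.sq_sqrt (by linarith)
  have hc2 : 2 < c := by nlinarith [Real.sqrt_nonneg (A + 3)]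
  have hrpos : 0 < r := by
    have : 2 / c < 1 := (div_lt_one (by linarith)).mpr hc2
    linarith
  have hmem : (-(r : ℂ)) ∈ ball (0 : ℂ) 1 := by
    rw [mem_ball, dist_zero_right]
    simp only [norm_neg, Complex.norm_real, Real.norm_eq_abs]
    rw [abs_of_pos hrpos]; exact hr2
  have hr2' : r ^ 2 < 1 := by nlinarith
  rw [p4 _ hmem]
  have hrewrite : (((A : ℂ) + 3) / ((A : ℂ) - 1)) * (1 / (1 - (-(r : ℂ)) ^ 2)) *
      ((-(r : ℂ)) ^ 2 + 2 * (-(r : ℂ)) + ((A : ℂ) - 1) / ((A : ℂ) + 3)) =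
      ((((A + 3) / (A - 1)) * (1 / (1 - r ^ 2)) * (r ^ 2 - 2 * r + (A - 1) / (A + 3)) : ℝ) : ℂ) := by
    push_cast
    ring
  rw [hrewrite, Complex.ofReal_re]
  -- real inequality
  have hq : r ^ 2 - 2 * r + (A - 1) / (A + 3) < 0 := by
    have hcpos : (0 : ℝ) < c := by linarith
    have h1 : c * (1 - r) < 2 := by
      have := (lt_div_iff₀ hcpos).mp (by linarith : 1 - r < 2 / c)
      linarith
    have h2 : (0 : ℝ) ≤ 1 - r := by linarith
    have h0 : 0 ≤ c * (1 - r) := mul_nonneg hcpos.le h2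
    have h3 : (c * (1 - r)) ^ 2 < 4 := by nlinarith
    have h3' : (A + 3) * (1 - r) ^ 2 < 4 := by
      have : (A + 3) * (1 - r) ^ 2 = (c * (1 - r)) ^ 2 := by rw [mul_pow, hcsq]
      linarith [this ▸ h3]
    have key : r ^ 2 - 2 * r + (A - 1) / (A + 3) = ((A + 3) * (1 - r) ^ 2 - 4) / (A + 3) := by
      field_simp
      ring
    rw [key]
    exact div_neg_of_neg_of_pos (by linarith) hA3pos
  have hf1 : 0 < (A + 3) / (A - 1) := div_pos hA3pos (by linarith)
  have hf2 : 0 < 1 / (1 - r ^ 2) := one_div_pos.mpr (by linarith)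
  exact mul_neg_of_pos_of_neg (mul_pos hf1 hf2) hq
end

section
/- Let f be analytic on the open unit disc 𝔻 with f(0)=0, f'(0)=1 and Re f'(z) > 0 for all z ∈ 𝔻. Then for every z ∈ 𝔻 with |z| = r, Re(1 + z f''(z)/f'(z)) ≤ 1 + 2r/(1−r²). -/
open Complex Metric Set

lemma mobius_abs_lt_one {z w : ℂ} (hz : ‖z‖ < 1) (hw : ‖w‖ < 1) :
    ‖(w + z) / (1 + (starRingEnd ℂ) z * w)‖ < 1 := by
  have hnz : Complex.normSq z < 1 := by rw [← Complex.sq_norm]; nlinarith [norm_nonneg z]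
  have hnw : Complex.normSq w < 1 := by rw [← Complex.sq_norm]; nlinarith [norm_nonneg w]
  have hd : (1 : ℂ) + (starRingEnd ℂ) z * w ≠ 0 := by
    intro h
    have h1 : (starRingEnd ℂ) z * w = -1 := by linear_combination h
    have := congrArg (‖·‖) h1
    simp only [norm_mul, norm_neg, norm_one, Complex.norm_conj] at this
    nlinarith [norm_nonneg z, norm_nonneg w]
  have hdpos : 0 < ‖1 + (starRingEnd ℂ) z * w‖ := by
    simpa [norm_pos_iff] using hd
  rw [norm_div, div_lt_one hdpos]
  apply lt_of_pow_lt_pow_left₀ 2 (norm_nonneg _)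
  rw [Complex.sq_norm, Complex.sq_norm]
  simp only [Complex.normSq_apply, Complex.add_re, Complex.add_im, Complex.mul_re,
    Complex.mul_im, Complex.conj_re, Complex.conj_im, Complex.one_re, Complex.one_im]
  simp only [Complex.normSq_apply] at hnz hnw
  nlinarith [mul_pos (sub_pos.2 hnz) (sub_pos.2 hnw)]

lemma cayley_abs_lt_one {a w : ℂ} (ha : 0 < a.re) (hw : 0 < w.re) :
    ‖(w - a) / (w + (starRingEnd ℂ) a)‖ < 1 := by
  have hd : w + (starRingEnd ℂ) a ≠ 0 := by
    intro h
    have : (w + (starRingEnd ℂ) a).re = 0 := by rw [h]; simp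
    simp only [Complex.add_re, Complex.conj_re] at this
    linarith
  have hdpos : 0 < ‖w + (starRingEnd ℂ) a‖ := by
    simpa [norm_pos_iff] using hd
  rw [norm_div, div_lt_one hdpos]
  apply lt_of_pow_lt_pow_left₀ 2 (norm_nonneg _)
  rw [Complex.sq_norm, Complex.sq_norm]
  simp only [Complex.normSq_apply, Complex.sub_re, Complex.sub_im, Complex.add_re,
    Complex.add_im, Complex.conj_re, Complex.conj_im]
  nlinarith [mul_pos ha hw]

/-- Schwarz–Pick type estimate for a function with positive real part on the unit disc. -/
lemma deriv_bound_of_pos_re (p : ℂ → ℂ) (hp : DifferentiableOn ℂ p (ball (0 : ℂ) 1))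
    (hre : ∀ z ∈ ball (0 : ℂ) 1, 0 < (p z).re) {z₀ : ℂ} (hz₀ : z₀ ∈ ball (0 : ℂ) 1) :
    ‖deriv p z₀‖ * (1 - ‖z₀‖ ^ 2) ≤ 2 * (p z₀).re := by
  have hz₀1 : ‖z₀‖ < 1 := by simpa [mem_ball_zero_iff] using hz₀
  set a : ℂ := p z₀ with ha_def
  have ha : 0 < a.re := hre z₀ hz₀
  have hane : a + (starRingEnd ℂ) a ≠ 0 := by
    rw [Complex.add_conj]
    exact_mod_cast Complex.ofReal_ne_zero.2 (by positivity)
  set φ : ℂ → ℂ := fun w => (w + z₀) / (1 + (starRingEnd ℂ) z₀ * w) with hφ_def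
  set ψ : ℂ → ℂ := fun w => (w - a) / (w + (starRingEnd ℂ) a) with hψ_def
  set H : ℂ → ℂ := fun w => ψ (p (φ w)) with hH_def
  -- basic facts
  have hdenφ : ∀ w ∈ ball (0 : ℂ) 1, (1 : ℂ) + (starRingEnd ℂ) z₀ * w ≠ 0 := by
    intro w hw h
    have hw1 : ‖w‖ < 1 := by simpa [mem_ball_zero_iff] using hw
    have h1 : (starRingEnd ℂ) z₀ * w = -1 := by linear_combination h
    have := congrArg (‖·‖) h1
    simp only [norm_mul, norm_neg, norm_one, Complex.norm_conj] at this
    nlinarith [norm_nonneg z₀, norm_nonneg w]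
  have hφmaps : MapsTo φ (ball (0 : ℂ) 1) (ball (0 : ℂ) 1) := by
    intro w hw
    have hw1 : ‖w‖ < 1 := by simpa [mem_ball_zero_iff] using hw
    simpa [mem_ball_zero_iff, hφ_def] using mobius_abs_lt_one hz₀1 hw1
  have hφdiff : DifferentiableOn ℂ φ (ball (0 : ℂ) 1) := by
    apply DifferentiableOn.div
    · exact (differentiable_id.add_const z₀).differentiableOn
    · exact ((differentiable_id.const_mul _).const_add 1).differentiableOn
    · exact hdenφ
  have hψdiff : DifferentiableOn ℂ ψ {w : ℂ | 0 < w.re} := by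
    apply DifferentiableOn.div
    · exact (differentiable_id.sub_const a).differentiableOn
    · exact (differentiable_id.add_const _).differentiableOn
    · intro w hw h
      have : (w + (starRingEnd ℂ) a).re = 0 := by rw [h]; simp
      simp only [Complex.add_re, Complex.conj_re] at this
      have : (0:ℝ) < w.re := hw
      linarith
  have hpmaps : MapsTo p (ball (0 : ℂ) 1) {w : ℂ | 0 < w.re} := fun z hz => hre z hz
  have hHdiff : DifferentiableOn ℂ H (ball (0 : ℂ) 1) :=
    (hψdiff.comp (hp.comp hφdiff hφmaps) (hpmaps.comp hφmaps))
  have hφ0 : φ 0 = z₀ := by simp [hφ_def]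
  have hH0 : H 0 = 0 := by simp [hH_def, hφ0, hψ_def, ← ha_def]
  have hHmaps : MapsTo H (ball (0 : ℂ) 1) (ball (H 0) 1) := by
    rw [hH0]
    intro w hw
    have := cayley_abs_lt_one ha (hre (φ w) (hφmaps hw))
    simpa [mem_ball_zero_iff, hH_def, hψ_def] using this
  -- Schwarz lemma
  have hschwarz : ‖deriv H 0‖ ≤ 1 := by
    have := Complex.norm_deriv_le_div_of_mapsTo_ball hHdiff (hHmaps.mono_right ball_subset_closedBall) one_pos
    simpa using this
  -- compute deriv H 0
  have hφd : HasDerivAt φ (1 - z₀ * (starRingEnd ℂ) z₀) 0 := by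
    have h1 : HasDerivAt (fun w : ℂ => w + z₀) 1 0 := (hasDerivAt_id 0).add_const z₀
    have h2 : HasDerivAt (fun w : ℂ => 1 + (starRingEnd ℂ) z₀ * w) ((starRingEnd ℂ) z₀) 0 := by
      simpa using ((hasDerivAt_id 0).const_mul ((starRingEnd ℂ) z₀)).const_add 1
    have := h1.div h2 (hdenφ 0 (by simp))
    refine this.congr_deriv ?_
    simp
  have hpa : HasDerivAt p (deriv p z₀) z₀ :=
    (hp.differentiableAt (isOpen_ball.mem_nhds hz₀)).hasDerivAt
  have hψd : HasDerivAt ψ ((a + (starRingEnd ℂ) a)⁻¹) a := by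
    have h1 : HasDerivAt (fun w : ℂ => w - a) 1 a := (hasDerivAt_id a).sub_const a
    have h2 : HasDerivAt (fun w : ℂ => w + (starRingEnd ℂ) a) 1 a :=
      (hasDerivAt_id a).add_const _
    have := h1.div h2 hane
    refine this.congr_deriv ?_
    field_simp
    ring
  have hpφd : HasDerivAt (fun w => p (φ w)) (deriv p z₀ * (1 - z₀ * (starRingEnd ℂ) z₀)) 0 := by
    have hpa' : HasDerivAt p (deriv p z₀) (φ 0) := by rw [hφ0]; exact hpa
    have := HasDerivAt.comp 0 hpa' hφd
    exact this
  have hHd : HasDerivAt H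
      ((a + (starRingEnd ℂ) a)⁻¹ * (deriv p z₀ * (1 - z₀ * (starRingEnd ℂ) z₀))) 0 := by
    have hψd' : HasDerivAt ψ ((a + (starRingEnd ℂ) a)⁻¹) (p (φ 0)) := by
      rw [hφ0]; exact hψd
    have := HasDerivAt.comp 0 hψd' hpφd
    exact this
  have hderivH : deriv H 0 =
      (a + (starRingEnd ℂ) a)⁻¹ * (deriv p z₀ * (1 - z₀ * (starRingEnd ℂ) z₀)) := hHd.deriv
  rw [hderivH] at hschwarz
  -- compute absolute values
  have habs1 : ‖a + (starRingEnd ℂ) a‖ = 2 * a.re := by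
    rw [Complex.add_conj, Complex.norm_of_nonneg (by positivity)]
  have habs2 : ‖1 - z₀ * (starRingEnd ℂ) z₀‖ = 1 - ‖z₀‖ ^ 2 := by
    rw [Complex.mul_conj, ← Complex.sq_norm,
      show (1 : ℂ) - ((‖z₀‖ ^ 2 : ℝ) : ℂ) = ((1 - ‖z₀‖ ^ 2 : ℝ) : ℂ) by
        push_cast; ring]
    exact Complex.norm_of_nonneg (by nlinarith [norm_nonneg z₀])
  rw [norm_mul, norm_mul, norm_inv, habs1, habs2] at hschwarz
  rw [inv_mul_le_iff₀ (by positivity)] at hschwarz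
  linarith [hschwarz]

/-- For `f ∈ P'` (analytic on `𝔻`, `f(0)=0`, `f'(0)=1`, `Re f' > 0`), one has
`Re(1 + z f''(z)/f'(z)) ≤ 1 + 2r/(1-r²)` where `r = |z|`. -/
theorem Pprime_convexity_estimate
    (f : ℂ → ℂ) (hf : AnalyticOn ℂ f (ball (0 : ℂ) 1))
    (hf0 : f 0 = 0) (hf'0 : deriv f 0 = 1)
    (hre : ∀ z ∈ ball (0 : ℂ) 1, 0 < (deriv f z).re) :
    ∀ z ∈ ball (0 : ℂ) 1,
      (1 + z * deriv (deriv f) z / deriv f z).re ≤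
        1 + 2 * ‖z‖ / (1 - (‖z‖) ^ 2) := by
  intro z hz
  set p : ℂ → ℂ := deriv f with hp_def
  have hpan : AnalyticOnNhd ℂ p (ball (0 : ℂ) 1) :=
    ((isOpen_ball.analyticOn_iff_analyticOnNhd).1 hf).deriv
  have hpd : DifferentiableOn ℂ p (ball (0 : ℂ) 1) := hpan.differentiableOn
  have key := deriv_bound_of_pos_re p hpd hre hz
  have hr : ‖z‖ < 1 := by simpa [mem_ball_zero_iff] using hz
  have h1r : 0 < 1 - ‖z‖ ^ 2 := by nlinarith [norm_nonneg z]
  have hpz : p z ≠ 0 := by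
    intro h
    have := hre z hz
    rw [h] at this
    simp at this
  have hpzpos : 0 < ‖p z‖ := by simpa [norm_pos_iff] using hpz
  have hre_le : (p z).re ≤ ‖p z‖ := Complex.re_le_norm _
  calc (1 + z * deriv p z / p z).re
      = 1 + (z * deriv p z / p z).re := by simp [Complex.add_re]
    _ ≤ 1 + ‖z * deriv p z / p z‖ := by
        gcongr; exact Complex.re_le_norm _
    _ = 1 + ‖z‖ * ‖deriv p z‖ / ‖p z‖ := by
        rw [norm_div, norm_mul]
    _ ≤ 1 + 2 * ‖z‖ / (1 - ‖z‖ ^ 2) := by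
        gcongr 1 + ?_
        rw [div_le_div_iff₀ hpzpos h1r]
        nlinarith [mul_le_mul_of_nonneg_left key (norm_nonneg z),
          norm_nonneg z, norm_nonneg (deriv p z)]
end

section
/- Let A ∈ (1,2], a ∈ [0,1], and define φ(r) = r⁴ − (2(A+1)(1−a)/(A+3))·r³ + (2(A(1−2a)−2a−3)/(A+3))·r² − (2(A(1−a)+3a+1)/(A+3))·r + (A−1)/(A+3). Then φ(0) > 0 and φ(1) < 0, so φ has a least root R_{Co(A)} in (0,1); and for every analytic function f on the open unit disc 𝔻 with f(0)=0, f'(0)=1, f''(0)/2 = a and Re f'(z) > 0 on 𝔻, one has Re T_f(z) > 0 for all |z| < R_{Co(A)}, where T_f(z) = (2/(A−1))·[((A+1)/2)·(1+z)/(1−z) − 1 − z f''(z)/f'(z)]. -/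
open Complex Metric Set

/-- If an analytic self-map of the closed unit disc attains modulus `1`
somewhere in the open disc, it is constant there. -/
lemma const_of_abs_eq_one {ψ : ℂ → ℂ} (hd : DifferentiableOn ℂ ψ (ball (0:ℂ) 1))
    (hb : ∀ ζ ∈ ball (0:ℂ) 1, ‖ψ ζ‖ ≤ 1)
    {z₁ : ℂ} (hz₁ : z₁ ∈ ball (0:ℂ) 1) (h1 : ‖ψ z₁‖ = 1) :
    EqOn ψ (Function.const ℂ (ψ z₁)) (ball (0:ℂ) 1) := by
  apply Complex.eqOn_of_isPreconnected_of_isMaxOn_norm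
    (convex_ball (0:ℂ) 1).isPreconnected isOpen_ball hd hz₁
  intro ζ hζ
  simp only [Function.comp_apply, Set.mem_setOf_eq, h1]
  exact hb ζ hζ

/-- Möbius modulus bound: `|(a+u)/(1+a u)| ≤ (a+ρ)/(1+a ρ)` for `0 ≤ a ≤ 1`, `|u| ≤ ρ ≤ 1`. -/
lemma mobius_abs_le {a ρ : ℝ} (ha0 : 0 ≤ a) (ha1 : a ≤ 1) (hρ1 : ρ ≤ 1) (u : ℂ)
    (hu : ‖u‖ ≤ ρ) :
    ‖((a:ℂ) + u) / (1 + (a:ℂ) * u)‖ ≤ (a + ρ) / (1 + a * ρ) := by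
  have hρ0 : 0 ≤ ρ := le_trans (norm_nonneg u) hu
  have hden : (0:ℝ) < 1 + a * ρ := by nlinarith
  by_cases h0 : (1 + (a:ℂ) * u) = 0
  · rw [h0, div_zero, norm_zero]
    positivity
  rw [norm_div, div_le_div_iff₀ (norm_pos_iff.mpr h0) hden]
  have h1 : ‖(a:ℂ) + u‖ ^ 2 * (1 + a*ρ)^2 ≤
      ((a + ρ) * ‖1 + (a:ℂ)*u‖) ^ 2 := by
    rw [Complex.sq_norm]
    rw [mul_pow, Complex.sq_norm]
    simp only [Complex.normSq_apply, Complex.add_re, Complex.add_im, Complex.ofReal_re,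
      Complex.ofReal_im, Complex.one_re, Complex.one_im, Complex.mul_re, Complex.mul_im]
    have hre : u.re ≤ ‖u‖ := Complex.re_le_norm u
    have hsq : u.re^2 + u.im^2 ≤ ρ^2 := by
      have := Complex.sq_norm u
      have h2 : ‖u‖ ^ 2 ≤ ρ^2 := by nlinarith [norm_nonneg u]
      rw [Complex.sq_norm, Complex.normSq_apply] at h2
      nlinarith [h2]
    have hs : u.re ≤ ρ := le_trans hre hu
    have ht1 : 0 ≤ (ρ^2 - (u.re^2+u.im^2)) * ((1-a^2) * (1+a^2+2*a*ρ)) :=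
      mul_nonneg (by linarith) (mul_nonneg (by nlinarith) (by nlinarith))
    have ht2 : 0 ≤ (2*a*(1-a^2)) * ((1-ρ^2) * (ρ - u.re)) :=
      mul_nonneg (by nlinarith) (mul_nonneg (by nlinarith) (by linarith))
    nlinarith [ht1, ht2]
  have hL : 0 ≤ ‖(a:ℂ) + u‖ * (1 + a*ρ) :=
    mul_nonneg (norm_nonneg _) hden.le
  have hR : 0 ≤ (a + ρ) * ‖1 + (a:ℂ)*u‖ :=
    mul_nonneg (by linarith) (norm_nonneg _)
  nlinarith [h1]

lemma one_add_ne_zero_of_abs_lt {u : ℂ} (h : ‖u‖ < 1) : (1 : ℂ) + u ≠ 0 := by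
  intro h0
  have : u = -1 := by linear_combination h0
  rw [this] at h
  simp at h

lemma one_sub_ne_zero_of_abs_lt {u : ℂ} (h : ‖u‖ < 1) : (1 : ℂ) - u ≠ 0 := by
  intro h0
  have : u = 1 := by linear_combination -h0
  rw [this] at h
  simp at h

/-- Schwarz–Pick value bound with fixed value at the origin. -/
lemma schwarz_pick_value {ψ : ℂ → ℂ} (hd : DifferentiableOn ℂ ψ (ball (0:ℂ) 1))
    (hb : ∀ ζ ∈ ball (0:ℂ) 1, ‖ψ ζ‖ ≤ 1)
    {a : ℝ} (ha0 : 0 ≤ a) (ha1 : a ≤ 1) (hψ0 : ψ 0 = (a:ℂ))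
    {z : ℂ} (hz : z ∈ ball (0:ℂ) 1) :
    ‖ψ z‖ ≤ (a + ‖z‖) / (1 + a * ‖z‖) := by
  have h0ball : (0:ℂ) ∈ ball (0:ℂ) 1 := by simp
  have hzlt : ‖z‖ < 1 := by simpa [mem_ball_zero_iff] using hz
  rcases eq_or_lt_of_le ha1 with ha1' | ha1'
  · -- a = 1 : trivial bound
    subst ha1'
    have : ((1:ℝ) + ‖z‖) / (1 + 1 * ‖z‖) = 1 := by
      rw [one_mul, div_self (by positivity)]
    rw [this]; exact hb z hz
  · -- a < 1 : strict interior case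
    have hstrict : ∀ ζ ∈ ball (0:ℂ) 1, ‖ψ ζ‖ < 1 := by
      intro ζ hζ
      rcases lt_or_eq_of_le (hb ζ hζ) with h | h
      · exact h
      · exfalso
        have hconst := const_of_abs_eq_one hd hb hζ h
        have : ψ 0 = ψ ζ := hconst h0ball
        rw [hψ0] at this
        rw [← this, Complex.norm_of_nonneg ha0] at h
        linarith
    set h : ℂ → ℂ := fun ζ => (ψ ζ - (a:ℂ)) / (1 - (a:ℂ) * ψ ζ) with hdef
    have hden : ∀ ζ ∈ ball (0:ℂ) 1, (1 : ℂ) - (a:ℂ) * ψ ζ ≠ 0 := by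
      intro ζ hζ
      apply one_sub_ne_zero_of_abs_lt
      rw [norm_mul, Complex.norm_of_nonneg ha0]
      nlinarith [hstrict ζ hζ, hb ζ hζ]
    have hh_diff : DifferentiableOn ℂ h (ball (0:ℂ) 1) :=
      DifferentiableOn.div (hd.sub (differentiableOn_const _))
        ((differentiableOn_const _).sub ((differentiableOn_const _).mul hd)) hden
    have hh0 : h 0 = 0 := by simp [hdef, hψ0]
    have hmaps : MapsTo h (ball (0:ℂ) 1) (ball (0:ℂ) 1) := by
      intro ζ hζ
      rw [mem_ball_zero_iff]
      have h1 : ‖ψ ζ - (a:ℂ)‖ < ‖1 - (a:ℂ) * ψ ζ‖ := by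
        rw [Complex.norm_def, Complex.norm_def]
        apply Real.sqrt_lt_sqrt (Complex.normSq_nonneg _)
        have hu : (ψ ζ).re^2 + (ψ ζ).im^2 < 1 := by
          have := hstrict ζ hζ
          rw [Complex.norm_def, ← Real.sqrt_one] at this
          have h2 := (Real.sqrt_lt_sqrt_iff (Complex.normSq_nonneg _)).mp this
          rw [Complex.normSq_apply] at h2
          nlinarith [h2]
        simp only [Complex.normSq_apply, Complex.sub_re, Complex.sub_im, Complex.mul_re,
          Complex.mul_im, Complex.one_re, Complex.one_im, Complex.ofReal_re, Complex.ofReal_im]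
        nlinarith [hu, mul_pos (by nlinarith : (0:ℝ) < 1 - a^2)
          (by nlinarith : (0:ℝ) < 1 - ((ψ ζ).re^2 + (ψ ζ).im^2))]
      rw [hdef]
      rw [norm_div, div_lt_one (lt_of_le_of_lt (norm_nonneg _) h1)]
      exact h1
    have hSchwarz : ‖h z‖ ≤ ‖z‖ :=
      Complex.norm_le_norm_of_mapsTo_ball hh_diff (hmaps.mono_right ball_subset_closedBall) hh0 hzlt
    have hhz1 : ‖h z‖ < 1 := lt_of_le_of_lt hSchwarz hzlt
    have hahz : ‖(a:ℂ) * h z‖ < 1 := by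
      rw [norm_mul, Complex.norm_of_nonneg ha0]
      nlinarith [norm_nonneg (h z)]
    have hden2 : (1 : ℂ) + (a:ℂ) * h z ≠ 0 := one_add_ne_zero_of_abs_lt hahz
    have hrec : ψ z = ((a:ℂ) + h z) / (1 + (a:ℂ) * h z) := by
      rw [eq_div_iff hden2, hdef]
      have hq := div_mul_cancel₀ (ψ z - (a:ℂ)) (hden z hz)
      beta_reduce
      linear_combination (-1:ℂ) * hq
    rw [hrec]
    exact mobius_abs_le ha0 ha1 hzlt.le (h z) hSchwarz

/-- Schwarz–Pick derivative bound. -/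
lemma schwarz_pick_deriv {ψ : ℂ → ℂ} (hd : DifferentiableOn ℂ ψ (ball (0:ℂ) 1))
    (hb : ∀ ζ ∈ ball (0:ℂ) 1, ‖ψ ζ‖ ≤ 1)
    {z₀ : ℂ} (hz₀ : z₀ ∈ ball (0:ℂ) 1) :
    ‖deriv ψ z₀‖ ≤
      (1 - ‖ψ z₀‖^2) / (1 - ‖z₀‖^2) := by
  have hz₀lt : ‖z₀‖ < 1 := by simpa [mem_ball_zero_iff] using hz₀
  have hz₀sq : (0:ℝ) < 1 - ‖z₀‖^2 := by nlinarith [norm_nonneg z₀]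
  by_cases hcase : ∃ ζ₁ ∈ ball (0:ℂ) 1, ‖ψ ζ₁‖ = 1
  · -- ψ is constant
    obtain ⟨ζ₁, hζ₁, h1⟩ := hcase
    have hconst := const_of_abs_eq_one hd hb hζ₁ h1
    have hderiv0 : deriv ψ z₀ = 0 := by
      have hev : ψ =ᶠ[nhds z₀] (Function.const ℂ (ψ ζ₁)) :=
        Filter.eventuallyEq_of_mem (isOpen_ball.mem_nhds hz₀) hconst
      rw [hev.deriv_eq]
      exact deriv_const _ _
    have habs : ‖ψ z₀‖ = 1 := by rw [hconst hz₀]; exact h1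
    rw [hderiv0, norm_zero, habs]
    simp
  · push_neg at hcase
    have hstrict : ∀ ζ ∈ ball (0:ℂ) 1, ‖ψ ζ‖ < 1 :=
      fun ζ hζ => lt_of_le_of_ne (hb ζ hζ) (hcase ζ hζ)
    set c : ℂ := ψ z₀ with hc
    have hclt : ‖c‖ < 1 := hstrict z₀ hz₀
    have hcsq : (0:ℝ) < 1 - ‖c‖^2 := by nlinarith [norm_nonneg c]
    set k : ℂ := starRingEnd ℂ z₀ with hk
    have hkabs : ‖k‖ = ‖z₀‖ := Complex.norm_conj z₀
    set m : ℂ → ℂ := fun ζ => (ζ + z₀) / (1 + k * ζ) with hm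
    have hmden : ∀ ζ ∈ ball (0:ℂ) 1, (1:ℂ) + k * ζ ≠ 0 := by
      intro ζ hζ
      apply one_add_ne_zero_of_abs_lt
      rw [norm_mul, hkabs]
      have : ‖ζ‖ < 1 := by simpa [mem_ball_zero_iff] using hζ
      nlinarith [norm_nonneg ζ, norm_nonneg z₀]
    have hmmaps : MapsTo m (ball (0:ℂ) 1) (ball (0:ℂ) 1) := by
      intro ζ hζ
      have hζlt : ‖ζ‖ < 1 := by simpa [mem_ball_zero_iff] using hζ
      rw [mem_ball_zero_iff, hm]
      have h1 : ‖ζ + z₀‖ < ‖1 + k * ζ‖ := by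
        rw [Complex.norm_def, Complex.norm_def]
        apply Real.sqrt_lt_sqrt (Complex.normSq_nonneg _)
        have hζn : ζ.re^2 + ζ.im^2 < 1 := by
          have h2 := hζlt
          rw [Complex.norm_def, ← Real.sqrt_one] at h2
          have := (Real.sqrt_lt_sqrt_iff (Complex.normSq_nonneg _)).mp h2
          rw [Complex.normSq_apply] at this; nlinarith
        have hz₀n : z₀.re^2 + z₀.im^2 < 1 := by
          have h2 := hz₀lt
          rw [Complex.norm_def, ← Real.sqrt_one] at h2
          have := (Real.sqrt_lt_sqrt_iff (Complex.normSq_nonneg _)).mp h2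
          rw [Complex.normSq_apply] at this; nlinarith
        simp only [Complex.normSq_apply, Complex.add_re, Complex.add_im, Complex.mul_re,
          Complex.mul_im, Complex.one_re, Complex.one_im, hk, Complex.conj_re, Complex.conj_im]
        nlinarith [mul_pos (by nlinarith : (0:ℝ) < 1 - (ζ.re^2 + ζ.im^2))
          (by nlinarith : (0:ℝ) < 1 - (z₀.re^2 + z₀.im^2))]
      rw [norm_div, div_lt_one (lt_of_le_of_lt (norm_nonneg _) h1)]
      exact h1
    have hmdiff : DifferentiableOn ℂ m (ball (0:ℂ) 1) :=
      DifferentiableOn.div (differentiableOn_id.add_const _)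
        ((differentiableOn_const _).add ((differentiableOn_const _).mul differentiableOn_id))
        hmden
    have hm0 : m 0 = z₀ := by simp [hm]
    -- the composed Möbius-normalized map
    set g : ℂ → ℂ := fun ζ => (ψ (m ζ) - c) / (1 - starRingEnd ℂ c * ψ (m ζ)) with hg
    have hgden : ∀ ζ ∈ ball (0:ℂ) 1, (1:ℂ) - starRingEnd ℂ c * ψ (m ζ) ≠ 0 := by
      intro ζ hζ
      apply one_sub_ne_zero_of_abs_lt
      rw [norm_mul, Complex.norm_conj]
      nlinarith [hstrict (m ζ) (hmmaps hζ), norm_nonneg c,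
        norm_nonneg (ψ (m ζ))]
    have hψm_diff : DifferentiableOn ℂ (fun ζ => ψ (m ζ)) (ball (0:ℂ) 1) :=
      hd.comp hmdiff hmmaps
    have hgdiff : DifferentiableOn ℂ g (ball (0:ℂ) 1) :=
      DifferentiableOn.div (hψm_diff.sub (differentiableOn_const _))
        ((differentiableOn_const _).sub ((differentiableOn_const _).mul hψm_diff)) hgden
    have hg0 : g 0 = 0 := by simp [hg, hm0, ← hc]
    have hgmaps : MapsTo g (ball (0:ℂ) 1) (ball (0:ℂ) 1) := by
      intro ζ hζ
      have hu : ‖ψ (m ζ)‖ < 1 := hstrict (m ζ) (hmmaps hζ)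
      rw [mem_ball_zero_iff, hg]
      have h1 : ‖ψ (m ζ) - c‖ < ‖1 - starRingEnd ℂ c * ψ (m ζ)‖ := by
        rw [Complex.norm_def, Complex.norm_def]
        apply Real.sqrt_lt_sqrt (Complex.normSq_nonneg _)
        have hun : (ψ (m ζ)).re^2 + (ψ (m ζ)).im^2 < 1 := by
          have h2 := hu
          rw [Complex.norm_def, ← Real.sqrt_one] at h2
          have := (Real.sqrt_lt_sqrt_iff (Complex.normSq_nonneg _)).mp h2
          rw [Complex.normSq_apply] at this; nlinarith
        have hcn : c.re^2 + c.im^2 < 1 := by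
          have h2 := hclt
          rw [Complex.norm_def, ← Real.sqrt_one] at h2
          have := (Real.sqrt_lt_sqrt_iff (Complex.normSq_nonneg _)).mp h2
          rw [Complex.normSq_apply] at this; nlinarith
        simp only [Complex.normSq_apply, Complex.sub_re, Complex.sub_im, Complex.mul_re,
          Complex.mul_im, Complex.one_re, Complex.one_im, Complex.conj_re, Complex.conj_im]
        nlinarith [mul_pos (by nlinarith : (0:ℝ) < 1 - ((ψ (m ζ)).re^2 + (ψ (m ζ)).im^2))
          (by nlinarith : (0:ℝ) < 1 - (c.re^2 + c.im^2))]
      rw [norm_div, div_lt_one (lt_of_le_of_lt (norm_nonneg _) h1)]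
      exact h1
    have hSchwarz : ‖deriv g 0‖ ≤ 1 :=
      Complex.norm_deriv_le_one_of_mapsTo_ball hgdiff (by rw [hg0]; exact hgmaps.mono_right ball_subset_closedBall) one_pos
    -- compute deriv g 0 by hand
    have h0ball : (0:ℂ) ∈ ball (0:ℂ) 1 := by simp
    have hm0den : (1:ℂ) + k * 0 ≠ 0 := hmden 0 h0ball
    have hm' : HasDerivAt m ((1 * (1 + k * 0) - (0 + z₀) * k) / (1 + k * 0)^2) 0 := by
      apply HasDerivAt.div
      · simpa using (hasDerivAt_id (0:ℂ)).add_const z₀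
      · simpa using ((hasDerivAt_id (0:ℂ)).const_mul k).const_add 1
      · exact hm0den
    have hm'v : HasDerivAt m (1 - z₀ * k) 0 := by
      convert hm' using 1; field_simp; ring
    have hψ' : HasDerivAt ψ (deriv ψ z₀) z₀ :=
      (hd.differentiableAt (isOpen_ball.mem_nhds hz₀)).hasDerivAt
    have hcomp : HasDerivAt (fun ζ => ψ (m ζ)) (deriv ψ z₀ * (1 - z₀ * k)) 0 := by
      have := HasDerivAt.comp (0:ℂ) (hm0 ▸ hψ') hm'v
      rw [hm0] at this
      exact this
    have hgden0 : (1:ℂ) - starRingEnd ℂ c * ψ (m 0) ≠ 0 := hgden 0 h0ball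
    have hg' : HasDerivAt g
        ((deriv ψ z₀ * (1 - z₀ * k) * (1 - starRingEnd ℂ c * ψ (m 0)) -
          (ψ (m 0) - c) * (-(starRingEnd ℂ c * (deriv ψ z₀ * (1 - z₀ * k))))) /
          (1 - starRingEnd ℂ c * ψ (m 0))^2) 0 := by
      apply HasDerivAt.div
      · exact hcomp.sub_const c
      · exact (hcomp.const_mul (starRingEnd ℂ c)).const_sub 1
      · exact hgden0
    have hgderiv : deriv g 0 = deriv ψ z₀ * (1 - z₀ * k) / (1 - starRingEnd ℂ c * c) := by
      have hne : (1:ℂ) - starRingEnd ℂ c * c ≠ 0 := by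
        rw [hm0, ← hc] at hgden0; exact hgden0
      rw [hg'.deriv, hm0, ← hc]
      field_simp
      ring
    -- convert to real bounds
    have habs1 : ‖1 - z₀ * k‖ = 1 - ‖z₀‖^2 := by
      rw [hk, Complex.mul_conj]
      rw [← Complex.ofReal_one, ← Complex.ofReal_sub, Complex.norm_real, Real.norm_eq_abs]
      rw [Complex.normSq_eq_norm_sq, _root_.abs_of_nonneg (by nlinarith)]
    have habs2 : ‖1 - starRingEnd ℂ c * c‖ = 1 - ‖c‖^2 := by
      have : starRingEnd ℂ c * c = c * starRingEnd ℂ c := by ring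
      rw [this, Complex.mul_conj]
      rw [← Complex.ofReal_one, ← Complex.ofReal_sub, Complex.norm_real, Real.norm_eq_abs]
      rw [Complex.normSq_eq_norm_sq, _root_.abs_of_nonneg (by nlinarith)]
    rw [hgderiv, norm_div, norm_mul, habs1, habs2] at hSchwarz
    rw [div_le_one hcsq] at hSchwarz
    rw [le_div_iff₀ hz₀sq]
    exact hSchwarz


set_option maxHeartbeats 1000000 in
lemma key_ineq (A a r t B : ℝ) (hA1 : 1 < A) (ha0 : 0 ≤ a) (ha1 : a ≤ 1)
    (hr0 : 0 ≤ r) (hr1 : r < 1) (ht0 : 0 ≤ t) (htT : t * (1 + a*r) ≤ a + r)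
    (hΦ : 0 < (A+3)*r^4 - 2*(A+1)*(1-a)*r^3 + 2*(A*(1-2*a)-2*a-3)*r^2
      - 2*(A*(1-a)+3*a+1)*r + (A-1))
    (hB : B ≤ 2*r*(t + r*(1-t^2)/(1-r^2))/(1-r^2*t^2)) :
    B + 1 < (A+1)/2 * ((1-r)/(1+r)) := by
  have h4 : (0:ℝ) < 1 + a*r := by nlinarith
  have ht1 : t ≤ 1 := by nlinarith
  have h1 : (0:ℝ) < 1 - r^2 := by nlinarith
  have hrt : r*t ≤ r := by nlinarith
  have hrt0 : 0 ≤ r*t := mul_nonneg hr0 ht0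
  have h2 : (0:ℝ) < 1 - r^2*t^2 := by nlinarith
  have h3 : (0:ℝ) < 1 + r := by linarith
  have h5 : (0:ℝ) < 1 + 2*a*r + r^2 := by nlinarith
  have h6 : (0:ℝ) < 1 + r*t := by nlinarith
  have hG0 : 0 < (A-1-(A+3)*r)*(1-r) - 4*r^2 := by
    nlinarith [mul_nonneg (mul_nonneg (by linarith : (0:ℝ) ≤ 4*r)
      (add_nonneg ha0 hr0)) h1.le]
  have hGt : 0 < (A-1-(A+3)*r)*(1-r)*(1+r*t) - 4*r*(t+r) := by
    rcases eq_or_lt_of_le (add_nonneg ha0 hr0) with h | hapr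
    · have ha' : a = 0 := by nlinarith
      have hr' : r = 0 := by nlinarith
      subst ha'; subst hr'; ring_nf; linarith
    · have e2 : (a+r)*(1+a*r)*((A-1-(A+3)*r)*(1-r)*(1+r*t) - 4*r*(t+r))
          = t*(1+a*r)*((A+3)*r^4 - 2*(A+1)*(1-a)*r^3 + 2*(A*(1-2*a)-2*a-3)*r^2
            - 2*(A*(1-a)+3*a+1)*r + (A-1))
          + ((a+r) - t*(1+a*r))*((1+a*r)*((A-1-(A+3)*r)*(1-r) - 4*r^2)) := by
        ring
      have hmpos : 0 < min ((A+3)*r^4 - 2*(A+1)*(1-a)*r^3 + 2*(A*(1-2*a)-2*a-3)*r^2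
            - 2*(A*(1-a)+3*a+1)*r + (A-1)) ((1+a*r)*((A-1-(A+3)*r)*(1-r) - 4*r^2)) :=
        lt_min hΦ (mul_pos h4 hG0)
      have hlam : 0 ≤ t*(1+a*r) := mul_nonneg ht0 h4.le
      have hmu : 0 ≤ (a+r) - t*(1+a*r) := by linarith
      have c1 := mul_le_mul_of_nonneg_left (min_le_left ((A+3)*r^4 - 2*(A+1)*(1-a)*r^3
            + 2*(A*(1-2*a)-2*a-3)*r^2 - 2*(A*(1-a)+3*a+1)*r + (A-1))
            ((1+a*r)*((A-1-(A+3)*r)*(1-r) - 4*r^2))) hlam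
      have c2 := mul_le_mul_of_nonneg_left (min_le_right ((A+3)*r^4 - 2*(A+1)*(1-a)*r^3
            + 2*(A*(1-2*a)-2*a-3)*r^2 - 2*(A*(1-a)+3*a+1)*r + (A-1))
            ((1+a*r)*((A-1-(A+3)*r)*(1-r) - 4*r^2))) hmu
      nlinarith [mul_pos hapr hmpos, mul_pos hapr h4, e2, c1, c2]
  have hN : 2*r*(t + r*(1-t^2)/(1-r^2))/(1-r^2*t^2) = 2*r*(t+r)/((1-r^2)*(1+r*t)) := by
    rw [div_eq_div_iff h2.ne' (by positivity)]
    field_simp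
    ring
  have hden : (0:ℝ) < (1-r^2)*(1+r*t) := mul_pos h1 h6
  have hmain : 2*r*(t+r)/((1-r^2)*(1+r*t)) + 1 < (A+1)*(1-r)/(2*(1+r)) := by
    rw [div_add' _ _ _ hden.ne', div_lt_div_iff₀ hden (by positivity)]
    nlinarith [mul_pos h3 hGt]
  have hrhs : (A+1)/2 * ((1-r)/(1+r)) = (A+1)*(1-r)/(2*(1+r)) := div_mul_div_comm _ _ _ _
  rw [hrhs]
  calc B + 1 ≤ 2*r*(t+r)/((1-r^2)*(1+r*t)) + 1 := by rw [← hN]; linarith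
    _ < _ := hmain

open Complex Metric Set

lemma herglotz_re_ge {z : ℂ} (h : ‖z‖ < 1) :
    (1 - ‖z‖) / (1 + ‖z‖) ≤ (((1:ℂ) + z) / (1 - z)).re := by
  have hz1 : (1:ℂ) - z ≠ 0 := by
    intro h0
    have : z = 1 := by linear_combination -h0
    rw [this] at h; simp at h
  have hns : 0 < Complex.normSq (1 - z) := Complex.normSq_pos.mpr hz1
  have hr2 : z.re^2 + z.im^2 = ‖z‖ ^ 2 := by
    rw [Complex.sq_norm, Complex.normSq_apply]; ring
  have hxle : z.re ≤ ‖z‖ := Complex.re_le_norm z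
  have habs0 : 0 ≤ ‖z‖ := norm_nonneg z
  rw [Complex.div_re]
  have hnsval : Complex.normSq (1 - z) = (1 - z.re)^2 + z.im^2 := by
    rw [Complex.normSq_apply]; simp [Complex.sub_re, Complex.sub_im]; ring
  rw [← add_div, div_le_div_iff₀ (by positivity) hns]
  simp only [Complex.add_re, Complex.add_im, Complex.sub_re, Complex.sub_im,
    Complex.one_re, Complex.one_im]
  rw [hnsval]
  have hxge : -‖z‖ ≤ z.re := by
    have h2 := Complex.re_le_norm (-z)
    simp only [Complex.neg_re, norm_neg] at h2
    linarith
  nlinarith [hr2, hxle, habs0, h, sq_nonneg z.im,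
    mul_nonneg (sub_nonneg.2 h.le) (by linarith : (0:ℝ) ≤ ‖z‖ + z.re)]

set_option maxHeartbeats 1000000 in
/-- Lower bound for the radius of concavity of the class `P'(a)` (functions in `P'`
with fixed second coefficient `a = f''(0)/2`). -/
theorem radius_of_concavity_Pprime_fixed_second_coefficient
    (A : ℝ) (hA : A ∈ Set.Ioc (1 : ℝ) 2) (a : ℝ) (ha : a ∈ Set.Icc (0 : ℝ) 1)
    (φ : ℝ → ℝ)
    (hφ : ∀ r : ℝ, φ r =
      r ^ 4 - (2 * (A + 1) * (1 - a) / (A + 3)) * r ^ 3 +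
        (2 * (A * (1 - 2 * a) - 2 * a - 3) / (A + 3)) * r ^ 2 -
        (2 * (A * (1 - a) + 3 * a + 1) / (A + 3)) * r + (A - 1) / (A + 3)) :
    0 < φ 0 ∧ φ 1 < 0 ∧
    ∃ R : ℝ, IsLeast {r : ℝ | r ∈ Set.Ioo (0 : ℝ) 1 ∧ φ r = 0} R ∧
      ∀ f : ℂ → ℂ, AnalyticOn ℂ f (ball (0 : ℂ) 1) →
        f 0 = 0 → deriv f 0 = 1 → deriv (deriv f) 0 / 2 = (a : ℂ) →
        (∀ z ∈ ball (0 : ℂ) 1, 0 < (deriv f z).re) →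
        ∀ z : ℂ, ‖z‖ < R → 0 < (Tfun A f z).re := by
  obtain ⟨hA1, hA2⟩ := hA
  obtain ⟨ha0, ha1⟩ := ha
  have hA3 : (0:ℝ) < A + 3 := by linarith
  have hA1' : (0:ℝ) < A - 1 := by linarith
  have hφ0 : 0 < φ 0 := by rw [hφ]; norm_num; positivity
  have hφ1 : φ 1 < 0 := by
    rw [hφ]
    have : (1:ℝ)^4 - 2*(A+1)*(1-a)/(A+3)*1^3 + 2*(A*(1-2*a)-2*a-3)/(A+3)*1^2
        - 2*(A*(1-a)+3*a+1)/(A+3)*1 + (A-1)/(A+3) = (-8*a-8)/(A+3) := by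
      field_simp; ring
    rw [this]
    apply div_neg_of_neg_of_pos (by linarith) hA3
  have hcont : Continuous φ := by
    have hfe : φ = fun r => r ^ 4 - (2 * (A + 1) * (1 - a) / (A + 3)) * r ^ 3 +
        (2 * (A * (1 - 2 * a) - 2 * a - 3) / (A + 3)) * r ^ 2 -
        (2 * (A * (1 - a) + 3 * a + 1) / (A + 3)) * r + (A - 1) / (A + 3) := funext hφ
    rw [hfe]; continuity
  -- existence of a root in (0,1)
  have hroot : ∃ r₀ ∈ Ioo (0:ℝ) 1, φ r₀ = 0 := by
    have h := intermediate_value_Ioo' (by norm_num : (0:ℝ) ≤ 1) hcont.continuousOn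
    have : (0:ℝ) ∈ Ioo (φ 1) (φ 0) := ⟨hφ1, hφ0⟩
    obtain ⟨r₀, hr₀, hval⟩ := h this
    exact ⟨r₀, hr₀, hval⟩
  obtain ⟨r₀, hr₀Ioo, hr₀val⟩ := hroot
  set S : Set ℝ := {r : ℝ | r ∈ Set.Ioo (0 : ℝ) 1 ∧ φ r = 0} with hS
  have hSne : S.Nonempty := ⟨r₀, hr₀Ioo, hr₀val⟩
  have hSbdd : BddBelow S := ⟨0, fun x hx => hx.1.1.le⟩
  set R : ℝ := sInf S with hR
  have hRzero : φ R = 0 := by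
    have hclosed : IsClosed {r : ℝ | φ r = 0} := isClosed_eq hcont continuous_const
    have hsub : S ⊆ {r : ℝ | φ r = 0} := fun x hx => hx.2
    have : R ∈ closure S := csInf_mem_closure hSne hSbdd
    have := (closure_minimal hsub hclosed) this
    exact this
  have hRpos : 0 < R := by
    have hopen : IsOpen {x : ℝ | 0 < φ x} := isOpen_lt continuous_const hcont
    obtain ⟨ε, hε, hball⟩ := Metric.isOpen_iff.mp hopen 0 hφ0
    have hlb : ∀ s ∈ S, ε ≤ s := by
      intro s hs
      by_contra hcon
      push_neg at hcon
      have : s ∈ Metric.ball (0:ℝ) ε := by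
        rw [Real.ball_eq_Ioo]; constructor <;> [linarith [hs.1.1]; linarith]
      have := hball this
      simp only [Set.mem_setOf_eq] at this
      linarith [hs.2, this]
    have : ε ≤ R := le_csInf hSne hlb
    linarith
  have hRle : R ≤ r₀ := csInf_le hSbdd ⟨hr₀Ioo, hr₀val⟩
  have hRlt1 : R < 1 := lt_of_le_of_lt hRle hr₀Ioo.2
  have hRmem : R ∈ S := ⟨⟨hRpos, hRlt1⟩, hRzero⟩
  have hRleast : IsLeast S R := ⟨hRmem, fun x hx => csInf_le hSbdd hx⟩
  -- positivity of φ on [0, R)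
  have hφpos : ∀ r : ℝ, 0 ≤ r → r < R → 0 < φ r := by
    intro r hr0 hrR
    by_contra hcon
    push_neg at hcon
    rcases eq_or_lt_of_le hcon with heq | hlt
    · have hrne : r ≠ 0 := by intro h0; rw [h0] at heq; linarith
      have : r ∈ S := ⟨⟨lt_of_le_of_ne hr0 (Ne.symm hrne), lt_trans hrR hRlt1⟩, heq⟩
      linarith [hRleast.2 this]
    · have h := intermediate_value_Ioo' hr0 hcont.continuousOn
      have h0mem : (0:ℝ) ∈ Ioo (φ r) (φ 0) := ⟨hlt, hφ0⟩
      obtain ⟨s, hsIoo, hsval⟩ := h h0mem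
      have : s ∈ S := ⟨⟨hsIoo.1, by linarith [hsIoo.2, hRlt1]⟩, hsval⟩
      linarith [hRleast.2 this, hsIoo.2]
  refine ⟨hφ0, hφ1, R, hRleast, ?_⟩
  intro f hf hf0 hf1 hf2 hre z hzR
  -- setup
  have hzlt1 : ‖z‖ < 1 := lt_trans hzR hRlt1
  have hzD : z ∈ ball (0:ℂ) 1 := by rwa [mem_ball_zero_iff]
  have h0D : (0:ℂ) ∈ ball (0:ℂ) 1 := by simp
  have hfa : AnalyticOnNhd ℂ f (ball (0:ℂ) 1) :=
    (isOpen_ball.analyticOn_iff_analyticOnNhd).mp hf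
  have hp : AnalyticOnNhd ℂ (deriv f) (ball (0:ℂ) 1) := hfa.deriv
  have hpd : DifferentiableOn ℂ (deriv f) (ball (0:ℂ) 1) := hp.differentiableOn
  have hpderiv : ∀ ζ ∈ ball (0:ℂ) 1, HasDerivAt (deriv f) (deriv (deriv f) ζ) ζ := by
    intro ζ hζ
    exact (hpd.differentiableAt (isOpen_ball.mem_nhds hζ)).hasDerivAt
  have hp1 : ∀ ζ ∈ ball (0:ℂ) 1, deriv f ζ + 1 ≠ 0 := by
    intro ζ hζ h0
    have := congrArg Complex.re h0
    simp only [Complex.add_re, Complex.one_re, Complex.zero_re] at this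
    linarith [hre ζ hζ]
  have hpne : ∀ ζ ∈ ball (0:ℂ) 1, deriv f ζ ≠ 0 := by
    intro ζ hζ h0
    have := congrArg Complex.re h0
    simp only [Complex.zero_re] at this
    linarith [hre ζ hζ]
  set w : ℂ → ℂ := fun ζ => (deriv f ζ - 1) / (deriv f ζ + 1) with hw
  have hwdiff : DifferentiableOn ℂ w (ball (0:ℂ) 1) :=
    DifferentiableOn.div (hpd.sub (differentiableOn_const _))
      (hpd.add (differentiableOn_const _)) hp1
  have hw0 : w 0 = 0 := by rw [hw]; simp [hf1]
  have hwlt : ∀ ζ ∈ ball (0:ℂ) 1, ‖w ζ‖ < 1 := by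
    intro ζ hζ
    have hnum : ‖deriv f ζ - 1‖ < ‖deriv f ζ + 1‖ := by
      rw [Complex.norm_def, Complex.norm_def]
      apply Real.sqrt_lt_sqrt (Complex.normSq_nonneg _)
      simp only [Complex.normSq_apply, Complex.sub_re, Complex.sub_im, Complex.add_re,
        Complex.add_im, Complex.one_re, Complex.one_im]
      nlinarith [hre ζ hζ]
    rw [hw]
    simp only
    rw [norm_div, div_lt_one (lt_of_le_of_lt (norm_nonneg _) hnum)]
    exact hnum
  set ψ : ℂ → ℂ := dslope w 0 with hψ
  have hψdiff : DifferentiableOn ℂ ψ (ball (0:ℂ) 1) :=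
    (differentiableOn_dslope (isOpen_ball.mem_nhds h0D)).mpr hwdiff
  have hwmaps : MapsTo w (ball (0:ℂ) 1) (ball (w 0) 1) := by
    rw [hw0]
    intro ζ hζ
    rw [mem_ball_zero_iff]
    exact hwlt ζ hζ
  have hψb : ∀ ζ ∈ ball (0:ℂ) 1, ‖ψ ζ‖ ≤ 1 := by
    intro ζ hζ
    have := Complex.norm_dslope_le_div_of_mapsTo_ball hwdiff (hwmaps.mono_right ball_subset_closedBall) hζ
    simpa using this
  have hq0 : deriv (deriv f) 0 = 2 * (a:ℂ) := by linear_combination 2 * hf2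
  have hψ0 : ψ 0 = (a:ℂ) := by
    rw [hψ, dslope_same]
    have hw'0 : HasDerivAt w
        ((deriv (deriv f) 0 * (deriv f 0 + 1) - (deriv f 0 - 1) * deriv (deriv f) 0) /
          (deriv f 0 + 1)^2) 0 := by
      apply HasDerivAt.div
      · exact (hpderiv 0 h0D).sub_const 1
      · exact (hpderiv 0 h0D).add_const 1
      · exact hp1 0 h0D
    rw [hw'0.deriv, hf1, hq0]
    rw [div_eq_iff (by norm_num : ((1:ℂ)+1)^2 ≠ 0)]
    ring
  -- quantities at the point z
  have hψzb : ‖ψ z‖ ≤ 1 := hψb z hzD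
  have htT' : ‖ψ z‖ ≤ (a + ‖z‖) / (1 + a * ‖z‖) :=
    schwarz_pick_value hψdiff hψb ha0 ha1 hψ0 hzD
  have hden_ar : (0:ℝ) < 1 + a * ‖z‖ := by
    nlinarith [norm_nonneg z, mul_nonneg ha0 (norm_nonneg z)]
  have htT : ‖ψ z‖ * (1 + a * ‖z‖) ≤ a + ‖z‖ := by
    rw [← le_div_iff₀ hden_ar]; exact htT'
  have hψ'b : ‖deriv ψ z‖ ≤
      (1 - ‖ψ z‖^2) / (1 - ‖z‖^2) :=
    schwarz_pick_deriv hψdiff hψb hzD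
  have hwid : ∀ ζ ∈ ball (0:ℂ) 1, w ζ = ζ * ψ ζ := by
    intro ζ hζ
    have := sub_smul_dslope w 0 ζ
    rw [hw0, sub_zero, sub_zero, smul_eq_mul] at this
    rw [← this, hψ]
  have hwz : w z = z * ψ z := hwid z hzD
  have hψzAt : DifferentiableAt ℂ ψ z := hψdiff.differentiableAt (isOpen_ball.mem_nhds hzD)
  have hwderiv2 : deriv w z = ψ z + z * deriv ψ z := by
    have h1 : HasDerivAt (fun ζ : ℂ => ζ * ψ ζ) (1 * ψ z + z * deriv ψ z) z :=
      (hasDerivAt_id z).mul hψzAt.hasDerivAt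
    have hev : w =ᶠ[nhds z] (fun ζ : ℂ => ζ * ψ ζ) :=
      Filter.eventuallyEq_of_mem (isOpen_ball.mem_nhds hzD) hwid
    rw [hev.deriv_eq, h1.deriv, one_mul]
  have hwderiv1 : deriv w z =
      (deriv (deriv f) z * (deriv f z + 1) - (deriv f z - 1) * deriv (deriv f) z) /
        (deriv f z + 1)^2 := by
    have hw' : HasDerivAt w _ z := HasDerivAt.div
      ((hpderiv z hzD).sub_const 1) ((hpderiv z hzD).add_const 1) (hp1 z hzD)
    exact hw'.deriv
  -- express z f''/f' via w
  have hX : z * deriv (deriv f) z / deriv f z =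
      2 * z * deriv w z / (1 - (w z)^2) := by
    rw [hwderiv1, hw]
    simp only
    have h1 := hpne z hzD
    have h2 := hp1 z hzD
    have h3 : (1:ℂ) - ((deriv f z - 1)/(deriv f z + 1))^2 =
        4 * deriv f z / (deriv f z + 1)^2 := by
      field_simp
      ring
    rw [h3]
    field_simp
    ring
  -- bound |z f''/f'|
  have habsw : ‖w z‖ = ‖z‖ * ‖ψ z‖ := by
    rw [hwz, norm_mul]
  have ht1 : ‖ψ z‖ ≤ 1 := hψzb
  have hr1 : ‖z‖ < 1 := hzlt1
  have hr0 : (0:ℝ) ≤ ‖z‖ := norm_nonneg z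
  have ht0 : (0:ℝ) ≤ ‖ψ z‖ := norm_nonneg (ψ z)
  have hrt1 : ‖z‖ * ‖ψ z‖ < 1 := by nlinarith
  have hdenom_pos : (0:ℝ) < 1 - ‖z‖^2 * ‖ψ z‖^2 := by
    nlinarith [mul_pos (sub_pos.2 hrt1)
      (by positivity : (0:ℝ) < 1 + ‖z‖ * ‖ψ z‖)]
  have hdenw : (1:ℝ) - ‖z‖^2 * ‖ψ z‖^2 ≤
      ‖1 - (w z)^2‖ := by
    have h1 : ‖(w z)^2‖ = ‖z‖^2 * ‖ψ z‖^2 := by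
      rw [norm_pow, habsw]; ring
    have h2 : (1:ℝ) ≤ ‖1 - (w z)^2‖ + ‖(w z)^2‖ := by
      have := norm_add_le (1 - (w z)^2) ((w z)^2)
      simpa using this
    linarith
  have hw'bound : ‖deriv w z‖ ≤
      ‖ψ z‖ + ‖z‖ *
        ((1 - ‖ψ z‖^2) / (1 - ‖z‖^2)) := by
    rw [hwderiv2]
    calc ‖ψ z + z * deriv ψ z‖
        ≤ ‖ψ z‖ + ‖z * deriv ψ z‖ := norm_add_le _ _
      _ = ‖ψ z‖ + ‖z‖ * ‖deriv ψ z‖ := by rw [norm_mul]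
      _ ≤ _ := by
          apply add_le_add_right
          exact mul_le_mul_of_nonneg_left hψ'b hr0
  have habsX : ‖z * deriv (deriv f) z / deriv f z‖ ≤
      2 * ‖z‖ * (‖ψ z‖ + ‖z‖ *
        ((1 - ‖ψ z‖^2) / (1 - ‖z‖^2))) /
        (1 - ‖z‖^2 * ‖ψ z‖^2) := by
    rw [hX, norm_div, norm_mul, norm_mul]
    simp only [Complex.norm_two]
    apply div_le_div₀ (mul_nonneg (by positivity) (add_nonneg ht0 (mul_nonneg hr0
        (div_nonneg (by nlinarith) (by nlinarith)))))
      (by nlinarith [hw'bound, hr0]) hdenom_pos hdenw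
  -- the polynomial positivity at r = |z|
  have hφr : 0 < φ (‖z‖) := hφpos _ hr0 hzR
  have hΦr : 0 < (A+3)*(‖z‖)^4 - 2*(A+1)*(1-a)*(‖z‖)^3
      + 2*(A*(1-2*a)-2*a-3)*(‖z‖)^2
      - 2*(A*(1-a)+3*a+1)*(‖z‖) + (A-1) := by
    have heq : (A+3)*(‖z‖)^4 - 2*(A+1)*(1-a)*(‖z‖)^3
        + 2*(A*(1-2*a)-2*a-3)*(‖z‖)^2
        - 2*(A*(1-a)+3*a+1)*(‖z‖) + (A-1) = (A+3) * φ (‖z‖) := by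
      rw [hφ]; field_simp
    rw [heq]
    exact mul_pos hA3 hφr
  -- apply the key inequality
  have hkey : ‖z * deriv (deriv f) z / deriv f z‖ + 1 <
      (A+1)/2 * ((1 - ‖z‖)/(1 + ‖z‖)) := by
    apply key_ineq A a (‖z‖) (‖ψ z‖) _ hA1 ha0 ha1 hr0 hr1 ht0 htT hΦr
    calc ‖z * deriv (deriv f) z / deriv f z‖
        ≤ 2 * ‖z‖ * (‖ψ z‖ + ‖z‖ *
          ((1 - ‖ψ z‖^2) / (1 - ‖z‖^2))) /
          (1 - ‖z‖^2 * ‖ψ z‖^2) := habsX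
      _ = 2 * ‖z‖ * (‖ψ z‖ + ‖z‖ *
          (1 - ‖ψ z‖^2) / (1 - ‖z‖^2)) /
          (1 - ‖z‖^2 * ‖ψ z‖^2) := by ring
  -- conclude positivity of Re T_f
  have hHre : (1 - ‖z‖)/(1 + ‖z‖) ≤ (((1:ℂ) + z)/(1 - z)).re :=
    herglotz_re_ge hzlt1
  have hXre : (z * deriv (deriv f) z / deriv f z).re ≤
      ‖z * deriv (deriv f) z / deriv f z‖ := Complex.re_le_norm _
  rw [Tfun]
  have hcast : (2 / ((A:ℂ) - 1)) = (((2/(A-1) : ℝ)):ℂ) := by push_cast; ring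
  have hcast2 : (((A:ℂ) + 1) / 2) * (1 + z) / (1 - z) =
      ((((A+1)/2 : ℝ)):ℂ) * (((1:ℂ) + z)/(1 - z)) := by push_cast; ring
  rw [hcast, hcast2]
  rw [Complex.re_ofReal_mul]
  apply mul_pos (by positivity)
  simp only [Complex.sub_re, Complex.one_re, Complex.re_ofReal_mul]
  have hA12 : (0:ℝ) < (A+1)/2 := by linarith
  have h1 : (A+1)/2 * ((1 - ‖z‖)/(1 + ‖z‖)) ≤
      (A+1)/2 * (((1:ℂ) + z)/(1 - z)).re := mul_le_mul_of_nonneg_left hHre hA12.le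
  linarith [hkey, hXre, h1]
end

section
/- Let A ∈ (1,2], α ≥ 1, and let f be analytic and locally univalent on the open unit disc 𝔻 with f(0)=0, f'(0)=1, satisfying |−z̄ + (1/2)(1−|z|²)·f''(z)/f'(z)| ≤ α for all z ∈ 𝔻. Then Re T_f(z) > 0 for all z with |z| < (A + 1 + 2α − 2√((A+α)(1+α)))/(A−1), where T_f(z) = (2/(A−1))·[((A+1)/2)·(1+z)/(1−z) − 1 − z f''(z)/f'(z)]. -/
open Complex Metric Set

set_option maxHeartbeats 1000000 in
/-- Radius of concavity for a member of a linear-invariant family of order `α`,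
characterised by Pommerenke's bound
`|-z̄ + (1/2)(1-|z|²) f''(z)/f'(z)| ≤ α` on `𝔻`. -/
theorem radius_of_concavity_LIF
    (A : ℝ) (hA : A ∈ Set.Ioc (1 : ℝ) 2) (α : ℝ) (hα : 1 ≤ α)
    (f : ℂ → ℂ) (hf : AnalyticOn ℂ f (ball (0 : ℂ) 1))
    (hf' : ∀ z ∈ ball (0 : ℂ) 1, deriv f z ≠ 0)
    (hf0 : f 0 = 0) (hf'0 : deriv f 0 = 1)
    (hord : ∀ z ∈ ball (0 : ℂ) 1,
      ‖-(starRingEnd ℂ) z +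
        (1 / 2 : ℂ) * ((1 - ‖z‖ ^ 2 : ℝ) : ℂ) *
          deriv (deriv f) z / deriv f z‖ ≤ α)
    (z : ℂ)
    (hz : ‖z‖ <
      (A + 1 + 2 * α - 2 * Real.sqrt ((A + α) * (1 + α))) / (A - 1)) :
    0 < (Tfun A f z).re := by
  obtain ⟨hA1, hA2⟩ := hA
  set r : ℝ := ‖z‖ with hr
  have hr0 : 0 ≤ r := norm_nonneg z
  have hA1pos : 0 < A - 1 := by linarith
  set s : ℝ := Real.sqrt ((A + α) * (1 + α)) with hs
  have hXnn : 0 ≤ (A + α) * (1 + α) := by nlinarith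
  have hs0 : 0 ≤ s := Real.sqrt_nonneg _
  have hs2 : s ^ 2 = (A + α) * (1 + α) := Real.sq_sqrt hXnn
  -- s > 1 + α
  have hs1 : 1 + α < s := by
    nlinarith [hs2, hs0]
  -- the hypothesis in multiplied form
  have hz' : r * (A - 1) < A + 1 + 2 * α - 2 * s := (lt_div_iff₀ hA1pos).mp hz
  -- r < 1
  have hr1 : r < 1 := by nlinarith
  -- the key quadratic inequality
  have hq : 0 < (A - 1) * r ^ 2 - 2 * (A + 1 + 2 * α) * r + (A - 1) := by
    have hB : 2 * s < A + 1 + 2 * α - (A - 1) * r := by linarith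
    nlinarith [mul_pos (by linarith : (0:ℝ) < A + 1 + 2 * α - (A - 1) * r - 2 * s)
      (by linarith : (0:ℝ) < A + 1 + 2 * α - (A - 1) * r + 2 * s), hs2]
  have hzball : z ∈ ball (0 : ℂ) 1 := by
    rw [mem_ball_zero_iff]; exact hr1
  set w : ℂ := z * deriv (deriv f) z / deriv f z with hw
  -- bound on Re w
  have H := hord z hzball
  have H2 : ‖z * (-(starRingEnd ℂ) z +
      (1 / 2 : ℂ) * ((1 - ‖z‖ ^ 2 : ℝ) : ℂ) *
        deriv (deriv f) z / deriv f z)‖ ≤ r * α := by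
    rw [norm_mul]
    exact mul_le_mul_of_nonneg_left H hr0
  have hzc : z * (starRingEnd ℂ) z = ((r ^ 2 : ℝ) : ℂ) := by
    rw [Complex.mul_conj]
    norm_cast
    rw [Complex.normSq_eq_norm_sq]
  have key : z * (-(starRingEnd ℂ) z +
      (1 / 2 : ℂ) * ((1 - ‖z‖ ^ 2 : ℝ) : ℂ) *
        deriv (deriv f) z / deriv f z)
      = -((r ^ 2 : ℝ) : ℂ) + (((1 - r ^ 2) / 2 : ℝ) : ℂ) * w := by
    have hzc' : z * (starRingEnd ℂ) z = ((r : ℂ)) ^ 2 := by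
      rw [hzc]; push_cast; ring
    rw [hw]
    push_cast
    rw [← hr]
    linear_combination -hzc'
  rw [key] at H2
  have hre : (-((r ^ 2 : ℝ) : ℂ) + (((1 - r ^ 2) / 2 : ℝ) : ℂ) * w).re
      = -(r ^ 2) + ((1 - r ^ 2) / 2) * w.re := by
    rw [Complex.add_re, Complex.neg_re, Complex.ofReal_re, Complex.re_ofReal_mul]
  have hwre : ((1 - r ^ 2) / 2) * w.re ≤ r * α + r ^ 2 := by
    have h1 := Complex.re_le_norm (-((r ^ 2 : ℝ) : ℂ) + (((1 - r ^ 2) / 2 : ℝ) : ℂ) * w)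
    rw [hre] at h1
    linarith [le_trans h1 H2]
  -- lower bound on Re ((1+z)/(1-z))
  have hrsq : z.re ^ 2 + z.im ^ 2 = r ^ 2 := by
    rw [hr, Complex.sq_norm, Complex.normSq_apply]; ring
  set N : ℝ := Complex.normSq (1 - z) with hN
  have h1z : (1 : ℂ) - z ≠ 0 := by
    refine sub_ne_zero.mpr ?_
    intro h
    rw [hr, ← h] at hr1
    simp at hr1
  have hNpos : 0 < N := by rw [hN]; exact Complex.normSq_pos.mpr h1z
  have hNval : N = (1 - z.re) ^ 2 + z.im ^ 2 := by
    rw [hN, Complex.normSq_apply, Complex.sub_re, Complex.sub_im, Complex.one_re,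
      Complex.one_im]
    ring
  have hxr : |z.re| ≤ r := Complex.abs_re_le_norm z
  have hNle : N ≤ (1 + r) ^ 2 := by
    rw [hNval]
    nlinarith [neg_abs_le z.re, hxr, hrsq]
  have hP : ((1 + z) / (1 - z)).re = (1 - r ^ 2) / N := by
    rw [Complex.div_re, ← hN]
    rw [← add_div]
    congr 1
    simp only [Complex.add_re, Complex.one_re, Complex.sub_re, Complex.add_im,
      Complex.one_im, Complex.sub_im]
    linear_combination -hrsq
  have hPge : (1 - r) / (1 + r) ≤ ((1 + z) / (1 - z)).re := by
    rw [hP, div_le_div_iff₀ (by linarith) hNpos]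
    nlinarith [mul_nonneg (by linarith : (0:ℝ) ≤ 1 - r)
      (by linarith : (0:ℝ) ≤ (1 + r) ^ 2 - N)]
  -- compute Re (Tfun A f z)
  have hAne : (A : ℂ) - 1 ≠ 0 := sub_ne_zero.mpr (by exact_mod_cast hA1.ne')
  have hT : (Tfun A f z).re
      = (2 / (A - 1)) * (((A + 1) / 2) * ((1 + z) / (1 - z)).re - 1 - w.re) := by
    unfold Tfun
    rw [← hw]
    have e1 : (2 / ((A : ℂ) - 1)) = ((2 / (A - 1) : ℝ) : ℂ) := by push_cast; ring
    have e2 : (((A : ℂ) + 1) / 2) * (1 + z) / (1 - z)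
        = (((A + 1) / 2 : ℝ) : ℂ) * ((1 + z) / (1 - z)) := by push_cast; ring
    rw [e1, e2, Complex.re_ofReal_mul, Complex.sub_re, Complex.sub_re,
      Complex.re_ofReal_mul, Complex.one_re]
  rw [hT]
  apply mul_pos (by positivity)
  have h1r2 : 0 < 1 - r ^ 2 := by nlinarith
  have hwre2 : w.re ≤ 2 * (r * α + r ^ 2) / (1 - r ^ 2) := by
    rw [le_div_iff₀ h1r2]
    nlinarith [hwre]
  have hkey : 0 < ((A + 1) / 2) * ((1 - r) / (1 + r)) - 1
      - 2 * (r * α + r ^ 2) / (1 - r ^ 2) := by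
    have heq : ((A + 1) / 2) * ((1 - r) / (1 + r)) - 1 - 2 * (r * α + r ^ 2) / (1 - r ^ 2)
        = ((A - 1) * r ^ 2 - 2 * (A + 1 + 2 * α) * r + (A - 1)) / (2 * (1 - r ^ 2)) := by
      field_simp
      ring
    rw [heq]
    exact div_pos hq (by linarith)
  have hmul : ((A + 1) / 2) * ((1 - r) / (1 + r)) ≤ ((A + 1) / 2) * ((1 + z) / (1 - z)).re :=
    mul_le_mul_of_nonneg_left hPge (by linarith)
  linarith
end

section
/- Let A ∈ (1,2] and λ ∈ (0,1]. Set r₁ = √((5 + λ − √((1−λ)(25−λ)))/(6λ)) and let φ(r) = −λ(9−A)r³ − λ(A+11)r² − (A+3)r + A − 1. Then φ(0) > 0 and φ(1) < 0, so φ has a least positive root r₂ in (0,1); and for every analytic function f on the open unit disc 𝔻 with f(0)=0, f'(0)=1, f''(0)=0 and |(z/f(z))²·f'(z) − 1| < λ for all z ∈ 𝔻, one has Re T_f(z) > 0 for all |z| < min{r₁, r₂}, where T_f(z) = (2/(A−1))·[((A+1)/2)·(1+z)/(1−z) − 1 − z f''(z)/f'(z)]. -/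
open Complex Metric Set

open Filter Topology

/-- Max-modulus style bound: dividing out a zero at the origin keeps the sup bound. -/
lemma dslope_norm_le {v : ℂ → ℂ} (hv : DifferentiableOn ℂ v (ball 0 1))
    (h0 : v 0 = 0) {C : ℝ} (hb : ∀ ζ ∈ ball (0:ℂ) 1, ‖v ζ‖ ≤ C)
    {z : ℂ} (hz : z ∈ ball (0:ℂ) 1) : ‖dslope v 0 z‖ ≤ C := by
  have hd : DifferentiableOn ℂ (dslope v 0) (ball 0 1) :=
    (Complex.differentiableOn_dslope (ball_mem_nhds _ one_pos)).mpr hv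
  rw [mem_ball, dist_zero_right] at hz
  have key : ∀ ρ ∈ Ioo ‖z‖ 1, ‖dslope v 0 z‖ ≤ C / ρ := by
    intro ρ hρ
    have hρ0 : 0 < ρ := lt_of_le_of_lt (norm_nonneg z) hρ.1
    have hcl : DiffContOnCl ℂ (dslope v 0) (ball 0 ρ) := by
      refine DifferentiableOn.diffContOnCl ?_
      rw [closure_ball (0:ℂ) hρ0.ne']
      exact hd.mono (fun w hw => mem_ball_zero_iff.mpr
        (lt_of_le_of_lt (mem_closedBall_zero_iff.mp hw) hρ.2))
    refine Complex.norm_le_of_forall_mem_frontier_norm_le isBounded_ball hcl ?_ ?_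
    · rw [frontier_ball (0:ℂ) hρ0.ne']
      intro w hw
      have hwn : ‖w‖ = ρ := mem_sphere_zero_iff_norm.mp hw
      have hw0 : w ≠ 0 := by intro h; rw [h, norm_zero] at hwn; exact hρ0.ne hwn
      rw [dslope_of_ne _ hw0, slope_def_module, norm_smul, norm_inv, sub_zero, hwn]
      rw [inv_mul_eq_div, div_le_div_iff_of_pos_right hρ0]
      simpa [h0] using hb w (by rw [mem_ball, dist_zero_right, hwn]; exact hρ.2)
    · rw [closure_ball (0:ℂ) hρ0.ne']
      exact mem_closedBall_zero_iff.mpr hρ.1.le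
  have hlim : Tendsto (fun ρ : ℝ => C / ρ) (𝓝[<] 1) (𝓝 C) := by
    have h1 : Tendsto (fun ρ : ℝ => ρ) (𝓝 (1:ℝ)) (𝓝 (1:ℝ)) := tendsto_id
    have : Tendsto (fun ρ : ℝ => C / ρ) (𝓝 (1:ℝ)) (𝓝 (C / 1)) :=
      tendsto_const_nhds.div h1 one_ne_zero
    rw [div_one] at this
    exact this.mono_left nhdsWithin_le_nhds
  refine ge_of_tendsto hlim ?_
  filter_upwards [Ioo_mem_nhdsLT_of_mem ⟨hz, le_rfl⟩] with ρ hρ using key ρ hρ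

/-- Cauchy estimate for the derivative at the center of a ball. -/
lemma cauchy_deriv_bound {Φ : ℂ → ℂ} {c : ℂ} {R M : ℝ} (hR : 0 < R)
    (hd : DifferentiableOn ℂ Φ (ball c R)) (hb : ∀ w ∈ ball c R, ‖Φ w‖ ≤ M) :
    ‖deriv Φ c‖ ≤ M / R := by
  have key : ∀ ρ ∈ Ioo (0:ℝ) R, ‖deriv Φ c‖ ≤ M / ρ := by
    intro ρ hρ
    have hcl : DiffContOnCl ℂ Φ (ball c ρ) := by
      refine DifferentiableOn.diffContOnCl ?_
      rw [closure_ball c hρ.1.ne']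
      exact hd.mono fun w hw => lt_of_le_of_lt (mem_closedBall.mp hw) hρ.2
    refine Complex.norm_deriv_le_of_forall_mem_sphere_norm_le hρ.1 hcl fun w hw => ?_
    exact hb w (by rw [mem_ball, mem_sphere.mp hw]; exact hρ.2)
  have hlim : Filter.Tendsto (fun ρ : ℝ => M / ρ) (nhdsWithin R (Iio R)) (nhds (M / R)) :=
    (tendsto_const_nhds.div tendsto_id hR.ne').mono_left nhdsWithin_le_nhds
  refine ge_of_tendsto hlim ?_
  filter_upwards [Ioo_mem_nhdsLT_of_mem ⟨hR, le_rfl⟩] with ρ hρ using key ρ hρ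

lemma mobius_norm_le {lam : ℝ} (hlam : 0 < lam) {b w : ℂ} (hb : ‖b‖ ≤ lam) (hw : ‖w‖ ≤ lam) :
    ‖(lam:ℂ)^2 * (w - b)‖ ≤ lam * ‖(lam:ℂ)^2 - (starRingEnd ℂ) b * w‖ := by
  have h1 : (0:ℝ) ≤ lam * ‖(lam:ℂ)^2 - (starRingEnd ℂ) b * w‖ := by positivity
  have hb2 : b.re^2 + b.im^2 ≤ lam^2 := by
    have h := pow_le_pow_left₀ (norm_nonneg b) hb 2
    rwa [Complex.sq_norm, Complex.normSq_apply, ← pow_two, ← pow_two] at h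
  have hw2 : w.re^2 + w.im^2 ≤ lam^2 := by
    have h := pow_le_pow_left₀ (norm_nonneg w) hw 2
    rwa [Complex.sq_norm, Complex.normSq_apply, ← pow_two, ← pow_two] at h
  rw [← Real.sqrt_sq (norm_nonneg _), ← Real.sqrt_sq h1]
  apply Real.sqrt_le_sqrt
  rw [mul_pow, Complex.sq_norm, Complex.sq_norm,
    show ((lam:ℂ))^2 = ((lam^2:ℝ):ℂ) by push_cast; ring]
  simp only [Complex.normSq_apply, Complex.mul_re, Complex.mul_im, Complex.sub_re,
    Complex.sub_im, Complex.conj_re, Complex.conj_im, Complex.ofReal_re, Complex.ofReal_im]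
  ring_nf
  nlinarith [mul_nonneg (sub_nonneg.2 hb2) (sub_nonneg.2 hw2), sq_nonneg lam,
    sq_nonneg (b.re*w.im - b.im*w.re), sq_nonneg (b.re*w.re + b.im*w.im)]


/-- Schwarz–Pick type estimate on the unit ball (with `1 - ‖z₀‖` instead of `1 - ‖z₀‖²`). -/
lemma schwarz_pick {ω : ℂ → ℂ} {lam : ℝ} (hlam : 0 < lam)
    (hd : DifferentiableOn ℂ ω (ball 0 1))
    (hb : ∀ w ∈ ball (0:ℂ) 1, ‖ω w‖ ≤ lam)
    {z₀ : ℂ} (hz₀ : z₀ ∈ ball (0:ℂ) 1) :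
    ‖deriv ω z₀‖ ≤ (lam^2 - ‖ω z₀‖^2) / (lam * (1 - ‖z₀‖)) := by
  set a := ω z₀ with ha
  have hr : ‖z₀‖ < 1 := mem_ball_zero_iff.mp hz₀
  have hR : (0:ℝ) < 1 - ‖z₀‖ := by linarith
  have hm : ‖a‖ ≤ lam := hb z₀ hz₀
  rcases eq_or_lt_of_le hm with hml | hml
  · -- degenerate case : maximum of the modulus attained inside, ω is constant
    have hmax : IsMaxOn (norm ∘ ω) (ball (0:ℂ) 1) z₀ := by
      intro w hw
      simp only [Function.comp_apply, Set.mem_setOf_eq]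
      calc ‖ω w‖ ≤ lam := hb w hw
        _ = ‖ω z₀‖ := hml.symm
    have hconst : Set.EqOn ω (Function.const ℂ (ω z₀)) (ball (0:ℂ) 1) :=
      Complex.eqOn_of_isPreconnected_of_isMaxOn_norm (convex_ball (0:ℂ) 1).isPreconnected
        isOpen_ball hd hz₀ hmax
    have hev : ω =ᶠ[nhds z₀] Function.const ℂ (ω z₀) :=
      Filter.eventuallyEq_of_mem (isOpen_ball.mem_nhds hz₀) hconst
    rw [hev.deriv_eq, show deriv (Function.const ℂ (ω z₀)) z₀ = 0 from deriv_const _ _,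
      norm_zero, hml]
    simp
  · -- main case : compose with a Möbius transformation
    set R := 1 - ‖z₀‖ with hRdef
    have hsub : ball z₀ R ⊆ ball (0:ℂ) 1 := by
      intro w hw
      rw [mem_ball_zero_iff]
      calc ‖w‖ = ‖w - z₀ + z₀‖ := by ring_nf
        _ ≤ ‖w - z₀‖ + ‖z₀‖ := norm_add_le _ _
        _ < R + ‖z₀‖ := by
            have := mem_ball_iff_norm.mp hw; linarith
        _ = 1 := by rw [hRdef]; ring
    have hden : ∀ ζ ∈ ball z₀ R, (lam:ℂ)^2 - (starRingEnd ℂ) a * ω ζ ≠ 0 := by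
      intro ζ hζ h
      have h2 : (lam:ℂ)^2 = (starRingEnd ℂ) a * ω ζ := by
        rwa [sub_eq_zero] at h
      have h3 := congrArg norm h2
      rw [norm_mul, RCLike.norm_conj] at h3
      have h4 : ‖((lam:ℂ))^2‖ = lam^2 := by
        rw [norm_pow, Complex.norm_real, Real.norm_of_nonneg hlam.le]
      rw [h4] at h3
      have h5 : ‖ω ζ‖ ≤ lam := hb ζ (hsub hζ)
      nlinarith [norm_nonneg (ω ζ), norm_nonneg a]
    set Φ : ℂ → ℂ :=
      fun ζ => (lam:ℂ)^2 * (ω ζ - a) / ((lam:ℂ)^2 - (starRingEnd ℂ) a * ω ζ) with hΦ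
    have hωd : DifferentiableOn ℂ ω (ball z₀ R) := hd.mono hsub
    have hΦd : DifferentiableOn ℂ Φ (ball z₀ R) := by
      apply DifferentiableOn.div
      · exact (hωd.sub_const a).const_mul _
      · exact ((hωd.const_mul _).const_sub _)
      · exact hden
    have hΦb : ∀ ζ ∈ ball z₀ R, ‖Φ ζ‖ ≤ lam := by
      intro ζ hζ
      rw [hΦ]
      simp only [norm_div]
      rw [div_le_iff₀ (norm_pos_iff.mpr (hden ζ hζ))]
      exact mobius_norm_le hlam hm (hb ζ (hsub hζ))
    have hcauchy : ‖deriv Φ z₀‖ ≤ lam / R := cauchy_deriv_bound hR hΦd hΦb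
    have hωz : HasDerivAt ω (deriv ω z₀) z₀ :=
      (hd.differentiableAt (isOpen_ball.mem_nhds hz₀)).hasDerivAt
    have hden0 : (lam:ℂ)^2 - (starRingEnd ℂ) a * a ≠ 0 :=
      hden z₀ (mem_ball_self hR)
    have hnum : HasDerivAt (fun ζ => (lam:ℂ)^2 * (ω ζ - a)) ((lam:ℂ)^2 * deriv ω z₀) z₀ :=
      (hωz.sub_const a).const_mul _
    have hden2 : HasDerivAt (fun ζ => (lam:ℂ)^2 - (starRingEnd ℂ) a * ω ζ)
        (-((starRingEnd ℂ) a * deriv ω z₀)) z₀ :=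
      (hωz.const_mul _).const_sub _
    have hΦder : HasDerivAt Φ
        (((lam:ℂ)^2 * deriv ω z₀ * ((lam:ℂ)^2 - (starRingEnd ℂ) a * a) -
          (lam:ℂ)^2 * (a - a) * -((starRingEnd ℂ) a * deriv ω z₀)) /
          ((lam:ℂ)^2 - (starRingEnd ℂ) a * a)^2) z₀ := by
      exact hnum.fun_div hden2 hden0
    have hΦval : deriv Φ z₀ = (lam:ℂ)^2 * deriv ω z₀ / ((lam:ℂ)^2 - (starRingEnd ℂ) a * a) := by
      rw [hΦder.deriv]
      rw [sub_self a]
      field_simp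
      ring
    have hre : (lam:ℂ)^2 - (starRingEnd ℂ) a * a = ((lam^2 - ‖a‖^2 : ℝ) : ℂ) := by
      rw [show (starRingEnd ℂ) a * a = ((Complex.normSq a : ℝ) : ℂ) by
        rw [mul_comm, Complex.mul_conj], Complex.sq_norm]
      push_cast
      ring
    have hpos : (0:ℝ) < lam^2 - ‖a‖^2 := by nlinarith [norm_nonneg a]
    have hnorm : ‖deriv Φ z₀‖ = lam^2 * ‖deriv ω z₀‖ / (lam^2 - ‖a‖^2) := by
      rw [hΦval, hre, norm_div, norm_mul, Complex.norm_real,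
        Real.norm_of_nonneg hpos.le]
      congr 1
      rw [norm_pow, Complex.norm_real, Real.norm_of_nonneg hlam.le]
    rw [hnorm] at hcauchy
    rw [div_le_div_iff₀ (by positivity) (by positivity)] at hcauchy
    rw [le_div_iff₀ (by positivity : (0:ℝ) < lam * (1 - ‖z₀‖))]
    have key : lam * (‖deriv ω z₀‖ * (lam * (1 - ‖z₀‖))) ≤ lam * (lam^2 - ‖a‖^2) := by
      calc lam * (‖deriv ω z₀‖ * (lam * (1 - ‖z₀‖))) = lam^2 * ‖deriv ω z₀‖ * R := by
            rw [hRdef]; ring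
        _ ≤ lam * (lam^2 - ‖a‖^2) := hcauchy
    exact le_of_mul_le_mul_left key hlam


/-- Mean value inequality specialised to `ℂ`, on the unit ball. -/
lemma norm_le_of_deriv_bound {W : ℂ → ℂ} (hWd : DifferentiableOn ℂ W (ball 0 1))
    (h0 : W 0 = 0) {C : ℝ} (hb : ∀ x ∈ ball (0:ℂ) 1, ‖deriv W x‖ ≤ C)
    {z : ℂ} (hz : z ∈ ball (0:ℂ) 1) : ‖W z‖ ≤ C * ‖z‖ := by
  have key := (convex_ball (0:ℂ) 1).norm_image_sub_le_of_norm_hasFDerivWithin_le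
    (f' := fun x => ContinuousLinearMap.smulRight (1 : ℂ →L[ℂ] ℂ) (deriv W x))
    (fun x hx => ((hWd.differentiableAt
      (isOpen_ball.mem_nhds hx)).hasDerivAt.hasFDerivAt).hasFDerivWithinAt)
    (fun x hx => by
      rw [ContinuousLinearMap.norm_smulRight_apply, norm_one, one_mul]
      exact hb x hx)
    (mem_ball_self one_pos) hz
  simpa [h0] using key


lemma auxR {lam r m : ℝ} (hlam : 0 < lam) (hm0 : 0 ≤ m) (hm : m ≤ lam) (hr0 : 0 ≤ r)
    (hr : r ≤ 1/2) :
    2*r^2*m + r^3*((lam^2 - m^2)/(lam*(1 - r))) ≤ 2*lam*r^2 := by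
  have h1 : 0 < lam*(1-r) := by nlinarith
  have key : r^3*(lam^2 - m^2) ≤ (2*lam*r^2 - 2*r^2*m)*(lam*(1-r)) := by
    nlinarith [mul_nonneg (mul_nonneg (sq_nonneg r) (sub_nonneg.2 hm))
      (by nlinarith : (0:ℝ) ≤ 2*lam*(1-r) - r*(lam+m)), sq_nonneg r, mul_nonneg hr0 hm0]
  have h2 : r^3*((lam^2 - m^2)/(lam*(1 - r))) ≤ 2*lam*r^2 - 2*r^2*m := by
    rw [mul_div_assoc', div_le_iff₀ h1]
    linarith [key]
  linarith

lemma core_bound {lam : ℝ} (hlam0 : 0 < lam) (hlam1 : lam ≤ 1) {f : ℂ → ℂ}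
    (hf : DifferentiableOn ℂ f (ball 0 1)) (hf0 : f 0 = 0) (hf1 : deriv f 0 = 1)
    (hf2 : deriv (deriv f) 0 = 0)
    (hU : ∀ w ∈ ball (0:ℂ) 1, w ≠ 0 → ‖(w / f w) ^ 2 * deriv f w - 1‖ < lam)
    {z : ℂ} (hz : z ∈ ball (0:ℂ) 1) (hz2 : ‖z‖ ≤ 1/2) :
    ‖z * deriv (deriv f) z / deriv f z‖ ≤ 6*lam*‖z‖^2/(1 - lam*‖z‖^2) := by
  have h0B : (0:ℂ) ∈ ball (0:ℂ) 1 := mem_ball_self one_pos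
  set F := dslope f 0 with hFdef
  have hFd : DifferentiableOn ℂ F (ball 0 1) :=
    (Complex.differentiableOn_dslope (ball_mem_nhds _ one_pos)).mpr hf
  have hF0 : F 0 = 1 := by rw [hFdef, dslope_same, hf1]
  have hfF : ∀ w ∈ ball (0:ℂ) 1, f w = w * F w := by
    intro w hw
    rcases eq_or_ne w 0 with rfl | hw0
    · simp [hf0]
    · rw [hFdef, dslope_of_ne _ hw0, slope_def_field, hf0]
      field_simp
      ring
  have hFne : ∀ w ∈ ball (0:ℂ) 1, F w ≠ 0 := by
    intro w hw
    rcases eq_or_ne w 0 with rfl | hw0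
    · rw [hF0]; exact one_ne_zero
    · intro hFw
      have hfw : f w = 0 := by rw [hfF w hw, hFw, mul_zero]
      have hcon := hU w hw hw0
      rw [hfw] at hcon
      simp at hcon
      linarith
  have hF'd : DifferentiableOn ℂ (deriv F) (ball 0 1) :=
    ((hFd.analyticOnNhd isOpen_ball).deriv_of_isOpen isOpen_ball).differentiableOn
  have hFat : ∀ w ∈ ball (0:ℂ) 1, HasDerivAt F (deriv F w) w := fun w hw =>
    (hFd.differentiableAt (isOpen_ball.mem_nhds hw)).hasDerivAt
  have hderivf : ∀ w ∈ ball (0:ℂ) 1, deriv f w = F w + w * deriv F w := by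
    intro w hw
    have hev : f =ᶠ[nhds w] fun ζ => ζ * F ζ :=
      Filter.eventuallyEq_of_mem (isOpen_ball.mem_nhds hw) (fun ζ hζ => hfF ζ hζ)
    have hda : HasDerivAt (fun ζ => ζ * F ζ) (1 * F w + w * deriv F w) w :=
      (hasDerivAt_id w).mul (hFat w hw)
    rw [hev.deriv_eq, hda.deriv]; ring
  have hF'0 : deriv F 0 = 0 := by
    have hev : deriv f =ᶠ[nhds 0] fun ζ => F ζ + ζ * deriv F ζ :=
      Filter.eventuallyEq_of_mem (isOpen_ball.mem_nhds h0B) (fun ζ hζ => hderivf ζ hζ)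
    have hda : HasDerivAt (fun ζ => F ζ + ζ * deriv F ζ)
        (deriv F 0 + (1 * deriv F 0 + 0 * deriv (deriv F) 0)) 0 :=
      (hFat 0 h0B).add ((hasDerivAt_id 0).mul
        ((hF'd.differentiableAt (isOpen_ball.mem_nhds h0B)).hasDerivAt))
    have h2 := hev.deriv_eq
    rw [hf2, hda.deriv] at h2
    have h3 : deriv F 0 + deriv F 0 = 0 := by
      have := h2.symm
      simpa using this
    linear_combination h3 / 2
  set u : ℂ → ℂ := fun w => (F w + w * deriv F w) / (F w)^2 - 1 with hudef
  have hud : DifferentiableOn ℂ u (ball 0 1) := by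
    apply DifferentiableOn.sub_const
    exact (hFd.add (differentiableOn_id.mul hF'd)).div (hFd.pow 2)
      (fun w hw => pow_ne_zero 2 (hFne w hw))
  have hu0 : u 0 = 0 := by rw [hudef]; simp [hF0]
  have hub : ∀ w ∈ ball (0:ℂ) 1, ‖u w‖ ≤ lam := by
    intro w hw
    rcases eq_or_ne w 0 with rfl | hw0
    · rw [hu0, norm_zero]; exact hlam0.le
    · have heq : u w = (w / f w)^2 * deriv f w - 1 := by
        rw [hudef]
        simp only
        rw [hfF w hw, hderivf w hw]
        have h1 := hFne w hw
        field_simp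
      rw [heq]
      exact (hU w hw hw0).le
  have huat : ∀ w ∈ ball (0:ℂ) 1, HasDerivAt u (deriv u w) w := fun w hw =>
    (hud.differentiableAt (isOpen_ball.mem_nhds hw)).hasDerivAt
  have hu'0 : deriv u 0 = 0 := by
    have hN : HasDerivAt (fun w => F w + w * deriv F w)
        (deriv F 0 + (1 * deriv F 0 + 0 * deriv (deriv F) 0)) 0 :=
      (hFat 0 h0B).add ((hasDerivAt_id 0).mul
        ((hF'd.differentiableAt (isOpen_ball.mem_nhds h0B)).hasDerivAt))
    have hD : HasDerivAt (fun w => (F w)^2) (2 * F 0 ^ 1 * deriv F 0) 0 := by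
      have h2 := (hFat 0 h0B).pow 2
      simp only [Nat.cast_ofNat] at h2
      exact h2
    have hQ := (hN.fun_div hD (by rw [hF0]; norm_num : (F 0)^2 ≠ 0)).sub_const 1
    have := hQ.deriv
    rw [hudef]
    rw [this, hF0, hF'0]
    simp
  set v := dslope u 0 with hvdef
  have hvd : DifferentiableOn ℂ v (ball 0 1) :=
    (Complex.differentiableOn_dslope (ball_mem_nhds _ one_pos)).mpr hud
  have hv0 : v 0 = 0 := by rw [hvdef, dslope_same, hu'0]
  have hvb : ∀ w ∈ ball (0:ℂ) 1, ‖v w‖ ≤ lam := fun w hw => dslope_norm_le hud hu0 hub hw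
  set ω := dslope v 0 with hωdef
  have hωd : DifferentiableOn ℂ ω (ball 0 1) :=
    (Complex.differentiableOn_dslope (ball_mem_nhds _ one_pos)).mpr hvd
  have hωb : ∀ w ∈ ball (0:ℂ) 1, ‖ω w‖ ≤ lam := fun w hw => dslope_norm_le hvd hv0 hvb hw
  have huω : ∀ w ∈ ball (0:ℂ) 1, u w = w^2 * ω w := by
    intro w hw
    rcases eq_or_ne w 0 with rfl | hw0
    · rw [hu0]; simp
    · rw [hωdef, dslope_of_ne _ hw0, slope_def_field, hv0, hvdef, dslope_of_ne _ hw0,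
        slope_def_field, hu0]
      field_simp
      ring
  have hωat : ∀ w ∈ ball (0:ℂ) 1, HasDerivAt ω (deriv ω w) w := fun w hw =>
    (hωd.differentiableAt (isOpen_ball.mem_nhds hw)).hasDerivAt
  have hu_deriv : ∀ w ∈ ball (0:ℂ) 1, deriv u w = 2*w*ω w + w^2 * deriv ω w := by
    intro w hw
    have hev : u =ᶠ[nhds w] fun ζ => ζ^2 * ω ζ :=
      Filter.eventuallyEq_of_mem (isOpen_ball.mem_nhds hw) (fun ζ hζ => huω ζ hζ)
    have hda := (hasDerivAt_pow 2 w).mul (hωat w hw)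
    rw [hev.deriv_eq, show (fun ζ => ζ^2 * ω ζ) = (fun x => x^2) * ω from rfl, hda.deriv]
    push_cast
    ring
  set g : ℂ → ℂ := fun w => (F w)⁻¹ with hgdef
  have hgd : DifferentiableOn ℂ g (ball 0 1) := hFd.inv hFne
  have hg0 : g 0 = 1 := by rw [hgdef]; simp [hF0]
  have hgat : ∀ w ∈ ball (0:ℂ) 1, HasDerivAt g (-deriv F w / (F w)^2) w := fun w hw =>
    (hFat w hw).inv (hFne w hw)
  have hgderiv : ∀ w ∈ ball (0:ℂ) 1, deriv g w = -deriv F w / (F w)^2 := fun w hw =>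
    (hgat w hw).deriv
  have hrel : ∀ w ∈ ball (0:ℂ) 1, g w - w * deriv g w = 1 + u w := by
    intro w hw
    rw [hgderiv w hw, hgdef, hudef]
    simp only
    have h1 := hFne w hw
    field_simp
    ring
  set W := dslope g 0 with hWdef
  have hWd : DifferentiableOn ℂ W (ball 0 1) :=
    (Complex.differentiableOn_dslope (ball_mem_nhds _ one_pos)).mpr hgd
  have hW0 : W 0 = 0 := by
    rw [hWdef, dslope_same, hgderiv 0 h0B, hF'0]
    simp
  have hgW : ∀ w ∈ ball (0:ℂ) 1, g w = 1 + w * W w := by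
    intro w hw
    rcases eq_or_ne w 0 with rfl | hw0
    · rw [hg0]; simp
    · rw [hWdef, dslope_of_ne _ hw0, slope_def_field, hg0]
      field_simp
      ring
  have hW'isω : ∀ w ∈ ball (0:ℂ) 1, w ≠ 0 → deriv W w = -ω w := by
    intro w hw hw0
    have hopen : IsOpen (ball (0:ℂ) 1 ∩ {ζ | ζ ≠ 0}) :=
      isOpen_ball.inter isOpen_ne
    have hmem : w ∈ ball (0:ℂ) 1 ∩ {ζ | ζ ≠ 0} := ⟨hw, hw0⟩
    have hev : W =ᶠ[nhds w] fun ζ => (g ζ - 1) * ζ⁻¹ := by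
      refine Filter.eventuallyEq_of_mem (hopen.mem_nhds hmem) ?_
      intro ζ hζ
      rw [hWdef, dslope_of_ne _ hζ.2, slope_def_field, hg0]
      rw [sub_zero, div_eq_mul_inv]
    have hda : HasDerivAt (fun ζ => (g ζ - 1) * ζ⁻¹)
        (deriv g w * w⁻¹ + (g w - 1) * (-(w^2)⁻¹)) w :=
      (((hgd.differentiableAt (isOpen_ball.mem_nhds hw)).hasDerivAt.sub_const 1).mul
        (hasDerivAt_inv hw0))
    rw [hev.deriv_eq, hda.deriv]
    have h1 := hrel w hw
    have h2 := huω w hw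
    have e1 : deriv g w * w⁻¹ + (g w - 1) * (-(w^2)⁻¹)
        = (w * deriv g w - (g w - 1)) / w^2 := by
      field_simp
      ring
    rw [e1]
    have e2 : w * deriv g w - (g w - 1) = -(u w) := by linear_combination -h1
    rw [e2, h2]
    field_simp
  have hW'b : ∀ w ∈ ball (0:ℂ) 1, ‖deriv W w‖ ≤ lam := by
    intro w hw
    rcases eq_or_ne w 0 with rfl | hw0
    · have hW'd : DifferentiableOn ℂ (deriv W) (ball 0 1) :=
        ((hWd.analyticOnNhd isOpen_ball).deriv_of_isOpen isOpen_ball).differentiableOn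
      have hcont : ContinuousAt (deriv W) 0 :=
        (hW'd.differentiableAt (isOpen_ball.mem_nhds h0B)).continuousAt
      have htend : Filter.Tendsto (fun ζ => ‖deriv W ζ‖)
          (nhdsWithin (0:ℂ) {(0:ℂ)}ᶜ) (nhds ‖deriv W 0‖) :=
        (hcont.norm.tendsto).mono_left nhdsWithin_le_nhds
      refine le_of_tendsto htend ?_
      filter_upwards [self_mem_nhdsWithin,
        mem_nhdsWithin_of_mem_nhds (isOpen_ball.mem_nhds h0B)] with ζ hζ0 hζB
      rw [hW'isω ζ hζB (by simpa using hζ0), norm_neg]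
      exact hωb ζ hζB
    · rw [hW'isω w hw hw0, norm_neg]
      exact hωb w hw
  have hWb : ∀ w ∈ ball (0:ℂ) 1, ‖W w‖ ≤ lam * ‖w‖ := fun w hw =>
    norm_le_of_deriv_bound hWd hW0 hW'b hw
  -- now the endgame at the point z
  have hr1 : ‖z‖ < 1 := mem_ball_zero_iff.mp hz
  have hr0 : (0:ℝ) ≤ ‖z‖ := norm_nonneg z
  have hlr : lam * ‖z‖^2 < 1 := by nlinarith
  have hden : (0:ℝ) < 1 - lam * ‖z‖^2 := by linarith
  have hFz := hFne z hz
  have huz : ‖u z‖ ≤ lam * ‖z‖^2 := by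
    rw [huω z hz, norm_mul, norm_pow]
    calc ‖z‖^2 * ‖ω z‖ ≤ ‖z‖^2 * lam := by
          exact mul_le_mul_of_nonneg_left (hωb z hz) (by positivity)
      _ = lam * ‖z‖^2 := by ring
  have h1ub : 1 - lam * ‖z‖^2 ≤ ‖1 + u z‖ := by
    have h := norm_add_le (1 + u z) (-u z)
    simp only [add_neg_cancel_right, norm_one, norm_neg] at h
    linarith
  have h1u : (1:ℂ) + u z ≠ 0 := by
    intro h
    rw [h, norm_zero] at h1ub
    linarith
  have hzW : ‖z * W z‖ ≤ lam * ‖z‖^2 := by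
    rw [norm_mul]
    calc ‖z‖ * ‖W z‖ ≤ ‖z‖ * (lam * ‖z‖) := by
          exact mul_le_mul_of_nonneg_left (hWb z hz) hr0
      _ = lam * ‖z‖^2 := by ring
  have hgz_low : 1 - lam * ‖z‖^2 ≤ ‖g z‖ := by
    rw [hgW z hz]
    have h := norm_add_le (1 + z * W z) (-(z * W z))
    simp only [add_neg_cancel_right, norm_one, norm_neg] at h
    linarith
  have hgz_ne : g z ≠ 0 := by
    intro h
    rw [h, norm_zero] at hgz_low
    linarith
  have hFg : F z = (g z)⁻¹ := by rw [hgdef]; simp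
  have hFz_up : ‖F z‖ ≤ (1 - lam * ‖z‖^2)⁻¹ := by
    rw [hFg, norm_inv]
    exact inv_anti₀ hden hgz_low
  have hfz' : deriv f z = (1 + u z) * (F z)^2 := by
    rw [hderivf z hz, hudef]
    simp only
    field_simp
    ring
  have hfz'ne : deriv f z ≠ 0 := by
    rw [hfz']; exact mul_ne_zero h1u (pow_ne_zero 2 hFz)
  have hf'' : deriv (deriv f) z
      = deriv u z * (F z)^2 + (1 + u z) * (2 * F z * deriv F z) := by
    have hev : deriv f =ᶠ[nhds z] fun ζ => (1 + u ζ) * (F ζ)^2 := by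
      refine Filter.eventuallyEq_of_mem (isOpen_ball.mem_nhds hz) ?_
      intro ζ hζ
      rw [hderivf ζ hζ, hudef]
      simp only
      have := hFne ζ hζ
      field_simp
      ring
    have hda : HasDerivAt (fun ζ => (1 + u ζ) * (F ζ)^2)
        ((0 + deriv u z) * (F z)^2 + (1 + u z) * (2 * F z ^ 1 * deriv F z)) z :=
      ((hasDerivAt_const z (1:ℂ)).add (huat z hz)).mul ((hFat z hz).pow 2)
    rw [hev.deriv_eq, hda.deriv]
    ring
  have e1 : z * deriv F z = -(z * W z - u z) * (F z)^2 := by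
    have h1 := hrel z hz
    have h2 := hgW z hz
    have h3 := hgderiv z hz
    have h4 : deriv F z = -deriv g z * (F z)^2 := by
      rw [h3]; field_simp
    have h5 : z * deriv g z = z * W z - u z := by linear_combination h2 - h1
    rw [h4]
    linear_combination (-(F z)^2) * h5
  have hsplit : z * deriv (deriv f) z / deriv f z
      = z * deriv u z / (1 + u z) + 2 * (-(z * W z - u z) * F z) := by
    have hinv : (1 + u z)⁻¹ * (1 + u z) = 1 := inv_mul_cancel₀ h1u
    rw [div_eq_iff hfz'ne, hf'', hfz']
    linear_combination (2 * (1 + u z) * F z) * e1 - (z * deriv u z * (F z)^2) * hinv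
  -- the three norm bounds
  have hT1 : ‖z * deriv u z‖ ≤ 2 * lam * ‖z‖^2 := by
    rw [hu_deriv z hz]
    have hgoal : z * (2*z*ω z + z^2 * deriv ω z) = 2*z^2*ω z + z^3*deriv ω z := by ring
    rw [hgoal]
    have hb1 : ‖(2:ℂ)*z^2*ω z‖ = 2*‖z‖^2*‖ω z‖ := by
      rw [norm_mul, norm_mul, norm_pow]
      simp

    have hb2 : ‖z^3*deriv ω z‖ = ‖z‖^3*‖deriv ω z‖ := by
      rw [norm_mul, norm_pow]
    have hsp := schwarz_pick hlam0 hωd hωb hz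
    calc ‖(2:ℂ)*z^2*ω z + z^3*deriv ω z‖ ≤ ‖(2:ℂ)*z^2*ω z‖ + ‖z^3*deriv ω z‖ :=
          norm_add_le _ _
      _ = 2*‖z‖^2*‖ω z‖ + ‖z‖^3*‖deriv ω z‖ := by rw [hb1, hb2]
      _ ≤ 2*‖z‖^2*‖ω z‖ + ‖z‖^3*((lam^2 - ‖ω z‖^2)/(lam*(1 - ‖z‖))) := by
          have := mul_le_mul_of_nonneg_left hsp (by positivity : (0:ℝ) ≤ ‖z‖^3)
          linarith
      _ ≤ 2*lam*‖z‖^2 :=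
          auxR hlam0 (norm_nonneg (ω z)) (hωb z hz) hr0 hz2
  have hT2 : ‖-(z * W z - u z) * F z‖ ≤ 2*lam*‖z‖^2 * (1 - lam*‖z‖^2)⁻¹ := by
    rw [norm_mul, norm_neg]
    have hzWu : ‖z * W z - u z‖ ≤ 2*lam*‖z‖^2 := by
      calc ‖z * W z - u z‖ ≤ ‖z * W z‖ + ‖u z‖ := norm_sub_le _ _
        _ ≤ 2*lam*‖z‖^2 := by linarith
    calc ‖z * W z - u z‖ * ‖F z‖ ≤ (2*lam*‖z‖^2) * (1 - lam*‖z‖^2)⁻¹ := by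
          exact mul_le_mul hzWu hFz_up (norm_nonneg _) (by positivity)
      _ = 2*lam*‖z‖^2 * (1 - lam*‖z‖^2)⁻¹ := by ring
  have hT1' : ‖z * deriv u z / (1 + u z)‖ ≤ 2*lam*‖z‖^2 / (1 - lam*‖z‖^2) := by
    rw [norm_div]
    exact div_le_div₀ (by positivity) hT1 hden h1ub
  calc ‖z * deriv (deriv f) z / deriv f z‖
      ≤ ‖z * deriv u z / (1 + u z)‖ + ‖(2:ℂ) * (-(z * W z - u z) * F z)‖ := by
        rw [hsplit]; exact norm_add_le _ _
    _ ≤ 2*lam*‖z‖^2 / (1 - lam*‖z‖^2) + 2*(2*lam*‖z‖^2 * (1 - lam*‖z‖^2)⁻¹) := by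
        have h := hT2
        rw [norm_mul]
        have h2 : ‖(2:ℂ)‖ = 2 := by norm_num
        rw [h2]
        linarith
    _ = 6*lam*‖z‖^2/(1 - lam*‖z‖^2) := by
        field_simp
        ring


lemma re_bound {z : ℂ} (hz : ‖z‖ < 1) :
    (1 - ‖z‖)/(1 + ‖z‖) ≤ ((1+z)/(1-z)).re := by
  have hr0 : 0 ≤ ‖z‖ := norm_nonneg z
  have h1 : (1:ℂ) - z ≠ 0 := by
    intro h
    have h2 : z = 1 := by linear_combination -h
    rw [h2] at hz
    norm_num at hz
  have hre : ((1+z)/(1-z)).re = (1 - Complex.normSq z)/Complex.normSq (1-z) := by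
    rw [Complex.div_re, ← add_div]
    congr 1
    simp only [Complex.add_re, Complex.one_re, Complex.sub_re, Complex.add_im,
      Complex.one_im, Complex.sub_im, Complex.normSq_apply]
    ring
  rw [hre]
  have hpos : 0 < Complex.normSq (1-z) := Complex.normSq_pos.mpr h1
  have hns : Complex.normSq (1-z) ≤ (1+‖z‖)^2 := by
    have habs : ‖(1:ℂ)-z‖ ≤ 1 + ‖z‖ := by
      calc ‖(1:ℂ)-z‖ ≤ ‖(1:ℂ)‖ + ‖z‖ := norm_sub_le _ _
        _ = 1 + ‖z‖ := by rw [norm_one]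
    have heq : Complex.normSq (1-z) = ‖(1:ℂ)-z‖^2 := by
      rw [Complex.sq_norm]
    rw [heq]
    nlinarith [norm_nonneg ((1:ℂ)-z)]
  have hnsz : Complex.normSq z = ‖z‖^2 := by rw [Complex.sq_norm]
  rw [hnsz]
  have hnum : 0 ≤ 1 - ‖z‖^2 := by nlinarith
  calc (1 - ‖z‖)/(1 + ‖z‖) = (1 - ‖z‖^2)/(1+‖z‖)^2 := by
        rw [div_eq_div_iff (by positivity) (by positivity)]
        ring
    _ ≤ (1 - ‖z‖^2)/Complex.normSq (1-z) :=
        div_le_div_of_nonneg_left hnum hpos hns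

lemma final_real {A lam r : ℝ} (hA1 : 1 < A) (hA2 : A ≤ 2) (hl0 : 0 < lam) (hl1 : lam ≤ 1)
    (hr0 : 0 ≤ r) (hr2 : r < 1/2)
    (hphi : 0 < -lam*(9-A)*r^3 - lam*(A+11)*r^2 - (A+3)*r + A - 1) :
    6*lam*r^2/(1 - lam*r^2) < (A+1)/2 * ((1-r)/(1+r)) - 1 := by
  have hd1 : 0 < 1 - lam*r^2 := by nlinarith
  have hd2 : 0 < 1 + r := by linarith
  rw [← sub_pos]
  have key : (A+1)/2 * ((1-r)/(1+r)) - 1 - 6*lam*r^2/(1 - lam*r^2)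
      = (-lam*(9-A)*r^3 - lam*(A+11)*r^2 - (A+3)*r + A - 1) / (2*(1+r)*(1 - lam*r^2)) := by
    have e1 : (1+r)*(1+r)⁻¹ = 1 := mul_inv_cancel₀ hd2.ne'
    have e2 : (1 - lam*r^2)*(1 - lam*r^2)⁻¹ = 1 := mul_inv_cancel₀ hd1.ne'
    rw [eq_div_iff (by positivity)]
    linear_combination ((A+1)*(1-r)*(1-lam*r^2)) * e1 - (12*lam*r^2*(1+r)) * e2
  rw [key]
  exact div_pos hphi (by positivity)

lemma phi_pos_small {A lam r : ℝ} (hA1 : 1 < A) (hA2 : A ≤ 2) (hl0 : 0 < lam) (hr0 : 0 ≤ r)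
    (hphi : 0 < -lam*(9-A)*r^3 - lam*(A+11)*r^2 - (A+3)*r + A - 1) : r < 1/2 := by
  nlinarith [mul_nonneg (mul_nonneg hl0.le (by linarith : (0:ℝ) ≤ 9 - A)) (pow_nonneg hr0 3),
    mul_nonneg (mul_nonneg hl0.le (by linarith : (0:ℝ) ≤ A + 11)) (pow_nonneg hr0 2)]

/-- Lower bound for the radius of concavity of the class `𝒰₀(λ)`. -/
theorem radius_of_concavity_U0
    (A : ℝ) (hA : A ∈ Set.Ioc (1 : ℝ) 2) (lam : ℝ) (hlam : lam ∈ Set.Ioc (0 : ℝ) 1)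
    (r₁ : ℝ)
    (hr₁ : r₁ = Real.sqrt ((5 + lam - Real.sqrt ((1 - lam) * (25 - lam))) / (6 * lam)))
    (φ : ℝ → ℝ)
    (hφ : ∀ r : ℝ, φ r =
      -lam * (9 - A) * r ^ 3 - lam * (A + 11) * r ^ 2 - (A + 3) * r + A - 1) :
    0 < φ 0 ∧ φ 1 < 0 ∧
    ∃ r₂ : ℝ, IsLeast {r : ℝ | r ∈ Set.Ioo (0 : ℝ) 1 ∧ φ r = 0} r₂ ∧
      ∀ f : ℂ → ℂ, AnalyticOn ℂ f (ball (0 : ℂ) 1) →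
        f 0 = 0 → deriv f 0 = 1 → deriv (deriv f) 0 = 0 →
        (∀ z ∈ ball (0 : ℂ) 1, z ≠ 0 →
          ‖(z / f z) ^ 2 * deriv f z - 1‖ < lam) →
        ∀ z : ℂ, ‖z‖ < min r₁ r₂ → 0 < (Tfun A f z).re := by
  obtain ⟨hA1, hA2⟩ := hA
  obtain ⟨hl0, hl1⟩ := hlam
  have hφc : Continuous φ := by
    have hfun : φ = fun r => -lam * (9 - A) * r ^ 3 - lam * (A + 11) * r ^ 2
        - (A + 3) * r + A - 1 := funext hφ
    rw [hfun]
    continuity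
  have hφ0 : 0 < φ 0 := by
    rw [hφ]
    norm_num
    linarith
  have hφ1 : φ 1 < 0 := by
    rw [hφ]
    nlinarith
  have hroot : ∃ c ∈ Ioo (0:ℝ) 1, φ c = 0 := by
    have him := intermediate_value_Ioo' (by norm_num : (0:ℝ) ≤ 1) hφc.continuousOn
    have h0m : (0:ℝ) ∈ Ioo (φ 1) (φ 0) := ⟨hφ1, hφ0⟩
    obtain ⟨c, hcI, hc0⟩ := him h0m
    exact ⟨c, hcI, hc0⟩
  obtain ⟨c, hcI, hc0⟩ := hroot
  set S := {r : ℝ | r ∈ Ioo (0:ℝ) 1 ∧ φ r = 0} with hSdef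
  have hSne : S.Nonempty := ⟨c, hcI, hc0⟩
  have hSbdd : BddBelow S := ⟨0, fun x hx => hx.1.1.le⟩
  have hδ : ∃ δ > (0:ℝ), ∀ x ∈ S, δ ≤ x := by
    have hev : φ ⁻¹' (Ioi 0) ∈ nhds (0:ℝ) :=
      hφc.continuousAt.preimage_mem_nhds (Ioi_mem_nhds hφ0)
    obtain ⟨ε, hε0, hεsub⟩ := Metric.mem_nhds_iff.mp hev
    refine ⟨ε, hε0, fun x hx => ?_⟩
    by_contra hlt
    push_neg at hlt
    have hxball : x ∈ Metric.ball (0:ℝ) ε := by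
      rw [Metric.mem_ball, Real.dist_eq, sub_zero, _root_.abs_of_nonneg hx.1.1.le]
      exact hlt
    have := hεsub hxball
    rw [Set.mem_preimage, Set.mem_Ioi, hx.2] at this
    exact lt_irrefl 0 this
  obtain ⟨δ, hδ0, hδle⟩ := hδ
  set r₂ := sInf S with hr₂def
  have hr₂c : r₂ ≤ c := csInf_le hSbdd ⟨hcI, hc0⟩
  have hr₂δ : δ ≤ r₂ := le_csInf hSne hδle
  have hr₂S : r₂ ∈ S := by
    have hcl : r₂ ∈ closure S := csInf_mem_closure hSne hSbdd
    have hφr₂ : φ r₂ = 0 := by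
      have hsub : closure S ⊆ φ ⁻¹' {0} :=
        closure_minimal (fun x hx => hx.2) (isClosed_singleton.preimage hφc)
      exact hsub hcl
    exact ⟨⟨lt_of_lt_of_le hδ0 hr₂δ, lt_of_le_of_lt hr₂c hcI.2⟩, hφr₂⟩
  have hleast : IsLeast S r₂ := ⟨hr₂S, fun x hx => csInf_le hSbdd hx⟩
  refine ⟨hφ0, hφ1, r₂, hleast, ?_⟩
  have hr₂1 : r₂ < 1 := hr₂S.1.2
  have hφpos : ∀ r, 0 ≤ r → r < r₂ → 0 < φ r := by
    intro r h0r hrr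
    by_contra hle
    push_neg at hle
    rcases eq_or_lt_of_le hle with heq | hlt
    · have hr0' : r ≠ 0 := by
        intro h
        rw [h] at heq
        linarith
      have hrS : r ∈ S :=
        ⟨⟨lt_of_le_of_ne h0r (Ne.symm hr0'), lt_of_lt_of_le hrr hr₂1.le⟩, by linarith⟩
      exact absurd (hleast.2 hrS) (not_le.mpr hrr)
    · have him := intermediate_value_Ioo' h0r (hφc.continuousOn)
      have h0m : (0:ℝ) ∈ Ioo (φ r) (φ 0) := ⟨hlt, hφ0⟩
      obtain ⟨x, hxI, hx0⟩ := him h0m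
      have hxS : x ∈ S := ⟨⟨hxI.1, by linarith [hxI.2, hr₂1]⟩, hx0⟩
      have := hleast.2 hxS
      linarith [hxI.2]
  intro f hfA hf0 hf1 hf2 hUf z hzlt
  have hzr₂ : ‖z‖ < r₂ := lt_of_lt_of_le hzlt (min_le_right _ _)
  have hzn : ‖z‖ = ‖z‖ := rfl
  have habs0 : (0:ℝ) ≤ ‖z‖ := norm_nonneg z
  have hφz : 0 < φ (‖z‖) := hφpos _ habs0 hzr₂
  rw [hφ] at hφz
  have hr5 : ‖z‖ < 1/2 := phi_pos_small hA1 hA2 hl0 habs0 hφz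
  have hz1 : z ∈ ball (0:ℂ) 1 := by
    rw [mem_ball_zero_iff, hzn]
    linarith [hzr₂, hr₂1]
  have hfd : DifferentiableOn ℂ f (ball 0 1) := hfA.differentiableOn
  have hcore := core_bound hl0 hl1 hfd hf0 hf1 hf2 hUf hz1 (by rw [hzn]; exact hr5.le)
  -- real part computation
  set r := ‖z‖ with hrd
  have hr1 : r < 1 := by linarith [hzr₂, hr₂1]
  have hlr : lam * r^2 < 1 := by nlinarith
  have hAC : (2 / ((A : ℂ) - 1)) = (((2/(A-1) : ℝ)) : ℂ) := by
    push_cast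
    ring
  have hBC : (((A : ℂ) + 1) / 2) * (1 + z) / (1 - z)
      = ((((A+1)/2 : ℝ)) : ℂ) * ((1 + z) / (1 - z)) := by
    push_cast
    ring
  rw [Tfun, hAC, hBC, Complex.re_ofReal_mul]
  have hc0 : 0 < 2/(A-1) := div_pos two_pos (by linarith)
  apply mul_pos hc0
  rw [Complex.sub_re, Complex.sub_re, Complex.re_ofReal_mul, Complex.one_re]
  have hrb := re_bound (z := z) hr1
  have hre_le : (z * deriv (deriv f) z / deriv f z).re
      ≤ 6*lam*r^2/(1 - lam*r^2) := by
    calc (z * deriv (deriv f) z / deriv f z).re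
        ≤ |(z * deriv (deriv f) z / deriv f z).re| := le_abs_self _
      _ ≤ ‖z * deriv (deriv f) z / deriv f z‖ := Complex.abs_re_le_norm _
      _ ≤ 6*lam*‖z‖^2/(1 - lam*‖z‖^2) := hcore
      _ = 6*lam*r^2/(1 - lam*r^2) := by rw [hzn]
  have hfinal := final_real hA1 hA2 hl0 hl1 habs0 hr5 hφz
  have h1 : (A+1)/2 * ((1-r)/(1+r)) ≤ (A+1)/2 * ((1+z)/(1-z)).re := by
    apply mul_le_mul_of_nonneg_left _ (by linarith : (0:ℝ) ≤ (A+1)/2)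
    rw [← hzn]
    exact hrb
  linarith
end
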